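/- arXiv:2112.06635 — 11 statements merged into one kernel-verified Lean document; each statement's English description precedes it below -/
import Mathlib

section
/- For an odd prime p and 0 ≤ i ≤ s-1, the sum of Lee weights over the ideal generated by p^i in Z/p^sZ equals (p^{2s-i} - p^i)/4. -/
/-- The Lee weight of an element of `ZMod m`. -/
def leeW (m : ℕ) (a : ZMod m) : ℕ := min a.val (m - a.val)

lemma aux_min_sum (k : ℕ) :
    4 * ∑ j ∈ Finset.range (2 * k + 1), min j (2 * k + 1 - j) = (2 * k + 1) ^ 2 - 1 := by
  have hsplit : (2 * k + 1) = (k + 1) + k := by omega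
  rw [hsplit, Finset.sum_range_add]
  have h1 : ∑ j ∈ Finset.range (k + 1), min j ((k + 1) + k - j)
      = ∑ j ∈ Finset.range (k + 1), j := by
    apply Finset.sum_congr rfl
    intro j hj
    simp only [Finset.mem_range] at hj
    omega
  have h2 : ∑ j ∈ Finset.range k, min ((k + 1) + j) ((k + 1) + k - ((k + 1) + j))
      = ∑ j ∈ Finset.range k, (j + 1) := by
    rw [← Finset.sum_range_reflect]
    apply Finset.sum_congr rfl
    intro j hj
    simp only [Finset.mem_range] at hj
    omega
  have hS : ∑ j ∈ Finset.range (k + 1), j = ∑ j ∈ Finset.range k, (j + 1) := by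
    rw [Finset.sum_range_succ']; simp
  have g : (∑ j ∈ Finset.range (k + 1), j) * 2 = (k + 1) * k := by
    rw [Finset.sum_range_id_mul_two]; simp
  have hsq : ((k + 1) + k) ^ 2 = 4 * ((k + 1) * k) + 1 := by ring
  rw [h1, h2, ← hS]
  omega

open scoped Classical in
/-- For an odd prime `p` and `0 ≤ i ≤ s-1`, the total Lee weight of the ideal
`⟨p^i⟩ ⊆ ℤ/p^sℤ` equals `(p^{2s-i} - p^i)/4`. -/
theorem total_lee_weight_ideal_odd (p s i : ℕ) (hp : p.Prime) (hodd : Odd p)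
    (hs : 0 < s) (hi : i ≤ s - 1) (m : ℕ) (hm : m = p ^ s) [NeZero m] :
    4 * ∑ a ∈ Finset.univ.filter (· ∈ Ideal.span {(p : ZMod m) ^ i}), leeW m a
      = p ^ (2 * s - i) - p ^ i := by
  have his : i < s := by omega
  set N := p ^ (s - i) with hN
  have hpi_pos : 0 < p ^ i := Nat.pow_pos hp.pos
  have hmul : p ^ i * N = m := by
    rw [hm, hN, ← pow_add]
    congr 1
    omega
  have hNodd : Odd N := hodd.pow
  have hN1 : 1 ≤ N := Nat.one_le_pow _ _ hp.pos
  have hcast : (p : ZMod m) ^ i = ((p ^ i : ℕ) : ZMod m) := by push_cast; ring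
  have hpi_lt : p ^ i < m := by
    rw [hm]
    exact Nat.pow_lt_pow_right hp.one_lt his
  -- set equality
  have hset : Finset.univ.filter (· ∈ Ideal.span {(p : ZMod m) ^ i})
      = (Finset.range N).image (fun j => ((p ^ i * j : ℕ) : ZMod m)) := by
    ext a
    simp only [Finset.mem_filter, Finset.mem_univ, true_and, Finset.mem_image,
      Finset.mem_range, hcast, Ideal.mem_span_singleton]
    constructor
    · rintro ⟨b, rfl⟩
      have hval : (((p ^ i : ℕ) : ZMod m) * b).val = (p ^ i * b.val) % m := by
        rw [ZMod.val_mul, ZMod.val_natCast_of_lt hpi_lt]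
      have hdvd : p ^ i ∣ (((p ^ i : ℕ) : ZMod m) * b).val := by
        rw [hval]
        rw [Nat.dvd_mod_iff ⟨N, hmul.symm⟩]
        exact Dvd.intro _ rfl
      obtain ⟨j, hj⟩ := hdvd
      refine ⟨j, ?_, ?_⟩
      · have hlt : (((p ^ i : ℕ) : ZMod m) * b).val < m := ZMod.val_lt _
        rw [hj] at hlt
        by_contra h
        push_neg at h
        have : m ≤ p ^ i * j := by
          calc m = p ^ i * N := hmul.symm
          _ ≤ p ^ i * j := Nat.mul_le_mul_left _ h
        omega
      · rw [← hj, ZMod.natCast_val, ZMod.cast_id]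
    · rintro ⟨j, _, rfl⟩
      push_cast
      exact Dvd.intro _ rfl
  rw [hset]
  rw [Finset.sum_image (by
    intro x hx y hy hxy
    simp only [Finset.mem_coe, Finset.mem_range] at hx hy
    have hxv : ((p ^ i * x : ℕ) : ZMod m).val = p ^ i * x :=
      ZMod.val_natCast_of_lt (by rw [← hmul]; exact (Nat.mul_lt_mul_left hpi_pos).mpr hx)
    have hyv : ((p ^ i * y : ℕ) : ZMod m).val = p ^ i * y :=
      ZMod.val_natCast_of_lt (by rw [← hmul]; exact (Nat.mul_lt_mul_left hpi_pos).mpr hy)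
    have := congrArg ZMod.val hxy
    rw [hxv, hyv] at this
    exact Nat.eq_of_mul_eq_mul_left hpi_pos this)]
  have hsum : ∑ j ∈ Finset.range N, leeW m ((p ^ i * j : ℕ) : ZMod m)
      = p ^ i * ∑ j ∈ Finset.range N, min j (N - j) := by
    rw [Finset.mul_sum]
    apply Finset.sum_congr rfl
    intro j hj
    simp only [Finset.mem_range] at hj
    have hv : ((p ^ i * j : ℕ) : ZMod m).val = p ^ i * j :=
      ZMod.val_natCast_of_lt (by rw [← hmul]; exact (Nat.mul_lt_mul_left hpi_pos).mpr hj)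
    rw [leeW, hv, ← hmul, ← Nat.mul_sub, min_mul_mul_left]
  rw [hsum]
  obtain ⟨k, hk⟩ := hNodd
  have h4 : 4 * (p ^ i * ∑ j ∈ Finset.range N, min j (N - j))
      = p ^ i * (4 * ∑ j ∈ Finset.range N, min j (N - j)) := by ring
  rw [h4]
  have hk' : N = 2 * k + 1 := by omega
  rw [hk', aux_min_sum, ← hk']
  have hNsq : p ^ i * N ^ 2 = p ^ (2 * s - i) := by
    rw [hN, ← pow_mul, ← pow_add]
    congr 1
    omega
  rw [Nat.mul_sub, mul_one, hNsq]
end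

section
/- Let C be a Z/p^sZ-submodule of (Z/p^sZ)^n and C' a nonzero submodule of C. Then d_L(C) ≤ |C'|/(|C'|-1) · (average Lee weight of C'). -/
/-- The Lee weight of a vector over `ZMod m`. -/
def leeWV (m n : ℕ) (x : Fin n → ZMod m) : ℕ := ∑ i, leeW m (x i)

/-- The minimum Lee distance of a linear code. -/
noncomputable def dLee (m n : ℕ) (C : Submodule (ZMod m) (Fin n → ZMod m)) : ℕ :=
  sInf {w | ∃ c ∈ C, c ≠ 0 ∧ leeWV m n c = w}

open scoped Classical in
/-- If `C'` is a nonzero subcode of `C`, then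
`d_L(C) ≤ |C'|/(|C'|-1) · (average Lee weight of C')`. -/
theorem plotkin_subcode_bound (p s n : ℕ) (hp : p.Prime) (hs : 0 < s)
    (m : ℕ) (hm : m = p ^ s) [NeZero m]
    (C C' : Submodule (ZMod m) (Fin n → ZMod m)) (hsub : C' ≤ C) (hC' : C' ≠ ⊥) :
    (dLee m n C : ℚ)
      ≤ (Nat.card C' : ℚ) / ((Nat.card C' : ℚ) - 1) *
        ((∑ c ∈ Finset.univ.filter (· ∈ C'), (leeWV m n c : ℚ)) / (Nat.card C' : ℚ)) := by
  obtain ⟨x, hxC', hx0⟩ := (Submodule.ne_bot_iff C').mp hC'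
  set S := Finset.univ.filter (· ∈ C') with hS
  have hNcard : Nat.card C' = S.card := by
    rw [Nat.card_eq_fintype_card, Fintype.card_subtype]
  have h0S : (0 : Fin n → ZMod m) ∈ S := by simp [hS, C'.zero_mem]
  have hxS : x ∈ S := by simp [hS, hxC']
  have hcard2 : 2 ≤ S.card :=
    Finset.one_lt_card.mpr ⟨0, h0S, x, hxS, fun h => hx0 h.symm⟩
  have hkey : (S.card - 1) * dLee m n C ≤ ∑ c ∈ S, leeWV m n c := by
    have herase : ∑ c ∈ S, leeWV m n c = ∑ c ∈ S.erase 0, leeWV m n c := by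
      rw [← Finset.sum_erase_add _ _ h0S]
      simp [leeWV, leeW]
    rw [herase]
    have hb : ∀ c ∈ S.erase 0, dLee m n C ≤ leeWV m n c := by
      intro c hc
      obtain ⟨hc0, hcS⟩ := Finset.mem_erase.mp hc
      have hcC' : c ∈ C' := by simpa [hS] using hcS
      exact Nat.sInf_le ⟨c, hsub hcC', hc0, rfl⟩
    calc (S.card - 1) * dLee m n C = (S.erase 0).card • dLee m n C := by
          rw [Finset.card_erase_of_mem h0S, smul_eq_mul]
      _ ≤ ∑ c ∈ S.erase 0, leeWV m n c := Finset.card_nsmul_le_sum _ _ _ hb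
  have hQ : ((S.card : ℚ) - 1) * dLee m n C ≤ ∑ c ∈ S, (leeWV m n c : ℚ) := by
    calc ((S.card : ℚ) - 1) * dLee m n C = (((S.card - 1) * dLee m n C : ℕ) : ℚ) := by
          rw [Nat.cast_mul, Nat.cast_sub (by omega : 1 ≤ S.card)]; push_cast; ring
      _ ≤ ((∑ c ∈ S, leeWV m n c : ℕ) : ℚ) := by exact_mod_cast hkey
      _ = ∑ c ∈ S, (leeWV m n c : ℚ) := by push_cast; rfl
  rw [hNcard]
  have hNpos : (0 : ℚ) < S.card := by positivity
  have hN0 : (S.card : ℚ) ≠ 0 := ne_of_gt hNpos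
  have hpos : (0 : ℚ) < (S.card : ℚ) - 1 := by
    have : (2 : ℚ) ≤ S.card := by exact_mod_cast hcard2
    linarith
  have hRHS : (S.card : ℚ) / ((S.card : ℚ) - 1) *
      ((∑ c ∈ S, (leeWV m n c : ℚ)) / (S.card : ℚ))
      = (∑ c ∈ S, (leeWV m n c : ℚ)) / ((S.card : ℚ) - 1) := by
    field_simp
  rw [hRHS, le_div_iff₀ hpos]
  linarith [hQ]
end

section
/- Let C be a Z/p^sZ-submodule of (Z/p^sZ)^n, and for j = 1,...,n let π_j be the j-th coordinate projection. Suppose for each j, π_j(C) = ⟨p^{i_j}⟩ for some i_j, and let n_i be the number of j with i_j = i. Then the average Lee weight of C equals ∑_{i=0}^{s-1} n_i · (average Lee weight of ⟨p^i⟩); in particular for p odd it equals (1/(4p^s))·(p^{2s}(n - n_s) - ∑_{i=0}^{s-1} p^{2i} n_i), and for p = 2 it equals 2^{s-2}(n - n_s). -/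
lemma Tnat : ∀ M : ℕ, 4 * (∑ k ∈ Finset.range M, min k (M - k)) + M % 2 = M ^ 2 := by
  intro M
  induction M using Nat.strong_induction_on with
  | _ M ih =>
    match M with
    | 0 => simp
    | 1 => simp
    | (M + 2) =>
      have key : (∑ k ∈ Finset.range (M + 2), min k (M + 2 - k))
          = (∑ k ∈ Finset.range M, min k (M - k)) + M + 1 := by
        rw [Finset.sum_range_succ', Finset.sum_range_succ]
        have h2 : ∀ k ∈ Finset.range M, min (k + 1) (M + 2 - (k + 1)) = min k (M - k) + 1 := by
          intro k hk
          rw [Finset.mem_range] at hk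
          omega
        rw [Finset.sum_congr rfl h2, Finset.sum_add_distrib, Finset.sum_const]
        simp only [Finset.card_range, smul_eq_mul, mul_one]
        omega
      have := ih M (by omega)
      rw [key]
      have hmod : (M + 2) % 2 = M % 2 := by omega
      nlinarith [this]

open Finset in
lemma mem_span_pow_iff (p s : ℕ) (hp : p.Prime) (m : ℕ) (hm : m = p ^ s) [NeZero m]
    (i : ℕ) (hi : i ≤ s) (a : ZMod m) :
    a ∈ Ideal.span {(p : ZMod m) ^ i} ↔ p ^ i ∣ a.val := by
  rw [Ideal.mem_span_singleton]
  constructor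
  · rintro ⟨c, rfl⟩
    have h1 : ((p : ZMod m) ^ i * c) = (((p ^ i * c.val : ℕ) : ZMod m)) := by
      push_cast [ZMod.natCast_val, ZMod.cast_id]
      rfl
    rw [h1, ZMod.val_natCast]
    rw [Nat.dvd_mod_iff (by rw [hm]; exact pow_dvd_pow p hi)]
    exact Dvd.intro _ rfl
  · rintro ⟨k, hk⟩
    refine ⟨(k : ZMod m), ?_⟩
    have : a = ((a.val : ℕ) : ZMod m) := by
      rw [ZMod.natCast_val, ZMod.cast_id]
    rw [this, hk]
    push_cast
    ring

open Finset in
lemma span_sum_card (p s : ℕ) (hp : p.Prime) (m : ℕ) (hm : m = p ^ s) [NeZero m]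
    (i : ℕ) (hi : i ≤ s) [DecidablePred (· ∈ Ideal.span {(p : ZMod m) ^ i})] :
    (∑ a ∈ univ.filter (· ∈ Ideal.span {(p : ZMod m) ^ i}), leeW m a
      = p ^ i * ∑ k ∈ range (p ^ (s - i)), min k (p ^ (s - i) - k)) ∧
    (univ.filter (· ∈ Ideal.span {(p : ZMod m) ^ i})).card = p ^ (s - i) := by
  have hppos : 0 < p ^ i := pow_pos hp.pos i
  have hsplit : p ^ i * p ^ (s - i) = m := by rw [hm, ← pow_add]; congr 1; omega
  let F : ℕ → ZMod m := fun k => ((p ^ i * k : ℕ) : ZMod m)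
  let G : ZMod m → ℕ := fun a => a.val / p ^ i
  have hGval : ∀ a : ZMod m, p ^ i ∣ a.val → p ^ i * G a = a.val := fun a ha =>
    Nat.mul_div_cancel' ha
  have hGmem : ∀ a ∈ univ.filter (· ∈ Ideal.span {(p : ZMod m) ^ i}),
      G a ∈ range (p ^ (s - i)) := by
    intro a ha
    rw [mem_filter] at ha
    rw [mem_span_pow_iff p s hp m hm i hi] at ha
    have hlt : a.val < m := ZMod.val_lt a
    have := hGval a ha.2
    rw [mem_range]
    by_contra hc
    push_neg at hc
    have : p ^ i * p ^ (s - i) ≤ p ^ i * G a := Nat.mul_le_mul_left _ hc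
    omega
  have hvalF : ∀ k ∈ range (p ^ (s - i)), (F k).val = p ^ i * k := by
    intro k hk
    rw [mem_range] at hk
    show ((p ^ i * k : ℕ) : ZMod m).val = p ^ i * k
    rw [ZMod.val_natCast, Nat.mod_eq_of_lt]
    calc p ^ i * k < p ^ i * p ^ (s - i) := by
          exact Nat.mul_lt_mul_left hppos |>.mpr hk
      _ = m := hsplit
  have hFmem : ∀ k ∈ range (p ^ (s - i)),
      F k ∈ univ.filter (· ∈ Ideal.span {(p : ZMod m) ^ i}) := by
    intro k hk
    rw [mem_filter]
    refine ⟨mem_univ _, ?_⟩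
    rw [mem_span_pow_iff p s hp m hm i hi, hvalF k hk]
    exact Dvd.intro _ rfl
  have hGF : ∀ k ∈ range (p ^ (s - i)), G (F k) = k := by
    intro k hk
    show (F k).val / p ^ i = k
    rw [hvalF k hk, Nat.mul_div_cancel_left _ hppos]
  have hFG : ∀ a ∈ univ.filter (· ∈ Ideal.span {(p : ZMod m) ^ i}), F (G a) = a := by
    intro a ha
    rw [mem_filter, mem_span_pow_iff p s hp m hm i hi] at ha
    show ((p ^ i * G a : ℕ) : ZMod m) = a
    rw [hGval a ha.2, ZMod.natCast_val, ZMod.cast_id]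
  constructor
  · rw [Finset.mul_sum]
    refine Finset.sum_nbij' G F hGmem hFmem hFG hGF ?_
    intro a ha
    have hmem := ha
    rw [mem_filter, mem_span_pow_iff p s hp m hm i hi] at hmem
    have hval := hGval a hmem.2
    have hlt : a.val < m := ZMod.val_lt a
    have hGlt : G a ∈ range (p ^ (s - i)) := hGmem a ha
    rw [mem_range] at hGlt
    rw [leeW, ← hval, ← hsplit, ← Nat.mul_sub, Nat.mul_min_mul_left]
  · exact (Finset.card_nbij' G F hGmem hFmem hFG hGF).trans (card_range _)

lemma submodule_eq_span_pow (p s : ℕ) (hp : p.Prime) (m : ℕ) (hm : m = p ^ s) [NeZero m]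
    (D : Submodule (ZMod m) (ZMod m)) :
    ∃ i ≤ s, D = Submodule.span (ZMod m) {(p : ZMod m) ^ i} := by
  haveI : IsPrincipalIdealRing (ZMod m) :=
    IsPrincipalIdealRing.of_surjective (Int.castRingHom (ZMod m)) ZMod.intCast_surjective
  obtain ⟨a, ha⟩ : (D : Ideal (ZMod m)).IsPrincipal := IsPrincipalIdealRing.principal D
  by_cases h0 : a = 0
  · refine ⟨s, le_refl s, ?_⟩
    have : (p : ZMod m) ^ s = 0 := by
      have : ((p ^ s : ℕ) : ZMod m) = 0 := by rw [← hm]; exact ZMod.natCast_self m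
      push_cast at this
      exact this
    rw [this, ha, h0]
  · have hval : a.val ≠ 0 := by
      simpa [ZMod.val_eq_zero] using h0
    set i := a.val.factorization p with hidef
    set u := a.val / p ^ i with hu
    have hdvd : p ^ i ∣ a.val := Nat.ordProj_dvd a.val p
    have hmul : p ^ i * u = a.val := Nat.mul_div_cancel' hdvd
    have hnd : ¬ p ∣ u := Nat.not_dvd_ordCompl hp hval
    have hile : i ≤ s := by
      by_contra hc
      push_neg at hc
      have h1 : p ^ i ≤ a.val := Nat.le_of_dvd (Nat.pos_of_ne_zero hval) hdvd
      have h2 : a.val < m := ZMod.val_lt a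
      have h3 : p ^ s < p ^ i := Nat.pow_lt_pow_right hp.one_lt hc
      omega
    refine ⟨i, hile, ?_⟩
    have hunit : IsUnit ((u : ℕ) : ZMod m) := by
      rw [ZMod.isUnit_iff_coprime, hm]
      exact Nat.Coprime.pow_right s ((Nat.Prime.coprime_iff_not_dvd hp).mpr hnd).symm
    have haeq : a = (p : ZMod m) ^ i * ((u : ℕ) : ZMod m) := by
      have : a = ((a.val : ℕ) : ZMod m) := by rw [ZMod.natCast_val, ZMod.cast_id]
      rw [this, ← hmul]
      push_cast
      ring
    rw [ha]
    show Ideal.span {a} = Ideal.span {(p : ZMod m) ^ i}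
    rw [haeq]
    exact Ideal.span_singleton_mul_right_unit hunit _

lemma span_pow_inj (p s : ℕ) (hp : p.Prime) (m : ℕ) (hm : m = p ^ s) [NeZero m]
    {i i' : ℕ} (hi : i ≤ s) (hi' : i' ≤ s)
    (h : Submodule.span (ZMod m) {(p : ZMod m) ^ i}
        = Submodule.span (ZMod m) {(p : ZMod m) ^ i'}) : i = i' := by
  classical
  have h1 := (span_sum_card p s hp m hm i hi).2
  have h2 := (span_sum_card p s hp m hm i' hi').2
  have : Ideal.span {(p : ZMod m) ^ i} = Ideal.span {(p : ZMod m) ^ i'} := h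
  rw [this] at h1
  rw [h2] at h1
  have := Nat.pow_right_injective hp.two_le h1.symm
  omega

open Finset in
lemma proj_avg (m n : ℕ) [NeZero m] (C : Submodule (ZMod m) (Fin n → ZMod m)) (j : Fin n)
    (g : ZMod m → ℚ) [DecidablePred (· ∈ C)]
    [DecidablePred (· ∈ Submodule.map (LinearMap.proj (R := ZMod m) (φ := fun _ : Fin n => ZMod m) j) C)] :
    (∑ c ∈ univ.filter (· ∈ C), g (c j)) / ((univ.filter (· ∈ C)).card : ℚ)
      = (∑ a ∈ univ.filter (· ∈ Submodule.map (LinearMap.proj j) C), g a)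
        / (((univ.filter (· ∈ Submodule.map (LinearMap.proj j) C)).card : ℚ)) := by
  classical
  set Cfin := univ.filter (· ∈ C) with hCfin
  set Dfin := univ.filter (· ∈ Submodule.map (LinearMap.proj (R := ZMod m) j) C) with hDfin
  set K := (Cfin.filter (fun c => c j = 0)).card with hK
  have himg : Cfin.image (fun c => c j) = Dfin := by
    ext a
    simp only [hCfin, hDfin, mem_image, mem_filter, mem_univ, true_and, Submodule.mem_map]
    constructor
    · rintro ⟨c, hc, rfl⟩; exact ⟨c, hc, rfl⟩
    · rintro ⟨c, hc, rfl⟩; exact ⟨c, hc, rfl⟩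
  have hfib : ∀ y ∈ Dfin, (Cfin.filter (fun c => c j = y)).card = K := by
    intro y hy
    rw [hDfin, mem_filter] at hy
    obtain ⟨c₀, hc₀, hc₀j⟩ := hy.2
    have hc₀j : c₀ j = y := hc₀j
    rw [hK]
    apply Finset.card_bij' (fun c _ => c - c₀) (fun d _ => d + c₀)
    · intro c hc
      rw [mem_filter] at hc ⊢
      rw [hCfin, mem_filter] at hc ⊢
      refine ⟨⟨mem_univ _, sub_mem hc.1.2 hc₀⟩, ?_⟩
      show c j - c₀ j = 0
      rw [hc.2, hc₀j, sub_self]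
    · intro d hd
      rw [mem_filter] at hd ⊢
      rw [hCfin, mem_filter] at hd ⊢
      refine ⟨⟨mem_univ _, add_mem hd.1.2 hc₀⟩, ?_⟩
      show d j + c₀ j = y
      rw [hd.2, hc₀j, zero_add]
    · intro c _; simp
    · intro d _; simp
  have hsum : ∀ f : ZMod m → ℚ, (∑ c ∈ Cfin, f (c j)) = (K : ℚ) * ∑ a ∈ Dfin, f a := by
    intro f
    have h0 : ∑ c ∈ Cfin, f (c j)
        = ∑ y ∈ Cfin.image (fun c : Fin n → ZMod m => c j), (Cfin.filter fun c : Fin n → ZMod m => c j = y).card • f y :=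
      Finset.sum_comp f (fun c : Fin n → ZMod m => c j)
    rw [h0, himg, Finset.mul_sum]
    refine Finset.sum_congr rfl ?_
    intro y hy
    rw [hfib y hy, nsmul_eq_mul]
  have hcard : (Cfin.card : ℚ) = (K : ℚ) * (Dfin.card : ℚ) := by
    have := hsum (fun _ => 1)
    simpa using this
  have hD0 : (0 : ZMod m) ∈ Dfin := by
    rw [hDfin, mem_filter]
    exact ⟨mem_univ _, Submodule.zero_mem _⟩
  have hDpos : 0 < Dfin.card := Finset.card_pos.mpr ⟨0, hD0⟩
  have hKpos : 0 < K := by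
    rw [hK]
    apply Finset.card_pos.mpr
    refine ⟨0, ?_⟩
    rw [mem_filter, hCfin, mem_filter]
    exact ⟨⟨mem_univ _, Submodule.zero_mem _⟩, rfl⟩
  rw [hsum g, hcard]
  have hK0 : (K : ℚ) ≠ 0 := Nat.cast_ne_zero.mpr hKpos.ne'
  have hD0' : (Dfin.card : ℚ) ≠ 0 := Nat.cast_ne_zero.mpr hDpos.ne'
  field_simp

open scoped Classical in
/-- The average Lee weight of a linear code in terms of its support subtype:
`avg(C) = ∑_{i=0}^{s-1} n_i · (average Lee weight of ⟨p^i⟩)`; in particular for `p` odd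
it equals `(1/(4p^s))·(p^{2s}(n-n_s) - ∑_{i<s} p^{2i} n_i)`,
and for `p = 2` it equals `2^{s-2}(n-n_s)`. -/
theorem average_lee_weight_code (p s n : ℕ) (hp : p.Prime) (hs : 0 < s)
    (m : ℕ) (hm : m = p ^ s) [NeZero m]
    (C : Submodule (ZMod m) (Fin n → ZMod m)) (nF : ℕ → ℕ)
    (hn : ∀ i, nF i = (Finset.univ.filter (fun j : Fin n =>
        Submodule.map (LinearMap.proj j) C
          = Submodule.span (ZMod m) {(p : ZMod m) ^ i})).card) :
    ((∑ c ∈ Finset.univ.filter (· ∈ C), (leeWV m n c : ℚ)) / (Nat.card C : ℚ)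
        = ∑ i ∈ Finset.range s, (nF i : ℚ) *
            ((∑ a ∈ Finset.univ.filter (· ∈ Ideal.span {(p : ZMod m) ^ i}),
                (leeW m a : ℚ)) / (p : ℚ) ^ (s - i))) ∧
    (Odd p →
      (∑ c ∈ Finset.univ.filter (· ∈ C), (leeWV m n c : ℚ)) / (Nat.card C : ℚ)
        = (1 / (4 * (p : ℚ) ^ s)) *
            ((p : ℚ) ^ (2 * s) * ((n : ℚ) - (nF s : ℚ))
              - ∑ i ∈ Finset.range s, (p : ℚ) ^ (2 * i) * (nF i : ℚ))) ∧
    (p = 2 →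
      (∑ c ∈ Finset.univ.filter (· ∈ C), (leeWV m n c : ℚ)) / (Nat.card C : ℚ)
        = ((2 : ℚ) ^ s / 4) * ((n : ℚ) - (nF s : ℚ))) := by
  classical
  have hq0 : (p : ℚ) ≠ 0 := Nat.cast_ne_zero.mpr hp.pos.ne'
  choose idx hidxle hidxeq using fun j : Fin n =>
    submodule_eq_span_pow p s hp m hm (Submodule.map (LinearMap.proj j) C)
  set Sq : ℕ → ℚ := fun i =>
    (∑ a ∈ Finset.univ.filter (· ∈ Ideal.span {(p : ZMod m) ^ i}), (leeW m a : ℚ))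
      / (p : ℚ) ^ (s - i) with hSqdef
  have hcardC : (Nat.card C : ℚ) = ((Finset.univ.filter (· ∈ C)).card : ℚ) := by
    congr 1
    rw [Nat.card_eq_fintype_card]
    simp [Fintype.card_subtype]
  have hIS : ∀ i : ℕ, Ideal.span {(p : ZMod m) ^ i}
      = Submodule.span (ZMod m) {(p : ZMod m) ^ i} := fun _ => rfl
  have hmain : (∑ c ∈ Finset.univ.filter (· ∈ C), (leeWV m n c : ℚ)) / (Nat.card C : ℚ)
      = ∑ j : Fin n, Sq (idx j) := by
    rw [hcardC]
    have hLW : ∀ c ∈ Finset.univ.filter (· ∈ C),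
        (leeWV m n c : ℚ) = ∑ j : Fin n, (leeW m (c j) : ℚ) := by
      intro c _
      rw [leeWV]
      push_cast
      rfl
    rw [Finset.sum_congr rfl hLW, Finset.sum_comm, Finset.sum_div]
    refine Finset.sum_congr rfl fun j _ => ?_
    refine (proj_avg m n C j (fun a => (leeW m a : ℚ))).trans ?_
    rw [hidxeq j, ← hIS (idx j)]
    rw [(span_sum_card p s hp m hm (idx j) (hidxle j)).2]
    rw [hSqdef]
    push_cast
    rfl
  have hfilter : ∀ i ≤ s, (Finset.univ.filter (fun j : Fin n => idx j = i))
      = (Finset.univ.filter (fun j : Fin n => Submodule.map (LinearMap.proj j) C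
          = Submodule.span (ZMod m) {(p : ZMod m) ^ i})) := by
    intro i hi
    ext j
    simp only [Finset.mem_filter, Finset.mem_univ, true_and]
    constructor
    · rintro rfl; exact hidxeq j
    · intro h
      exact span_pow_inj p s hp m hm (hidxle j) hi ((hidxeq j).symm.trans h)
  have hgroup : ∑ j : Fin n, Sq (idx j)
      = ∑ i ∈ Finset.range (s + 1), (nF i : ℚ) * Sq i := by
    rw [← Finset.sum_fiberwise_of_maps_to
      (fun j _ => Finset.mem_range.mpr (Nat.lt_succ_of_le (hidxle j))) (fun j => Sq (idx j))]
    refine Finset.sum_congr rfl fun i hi => ?_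
    rw [Finset.mem_range] at hi
    have h1 : ∀ j ∈ Finset.univ.filter (fun j : Fin n => idx j = i), Sq (idx j) = Sq i :=
      fun j hj => by rw [(Finset.mem_filter.mp hj).2]
    rw [Finset.sum_congr rfl h1, Finset.sum_const, hfilter i (by omega), ← hn i, nsmul_eq_mul]
  have hsumn : (∑ i ∈ Finset.range (s + 1), nF i) = n := by
    have h0 : (Finset.univ : Finset (Fin n)).card
        = ∑ i ∈ Finset.range (s + 1), (Finset.univ.filter (fun j : Fin n => idx j = i)).card :=
      Finset.card_eq_sum_card_fiberwise
        (fun j _ => Finset.mem_range.mpr (Nat.lt_succ_of_le (hidxle j)))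
    rw [Finset.card_univ, Fintype.card_fin] at h0
    have h2 : ∑ i ∈ Finset.range (s + 1), nF i
        = ∑ i ∈ Finset.range (s + 1), (Finset.univ.filter (fun j : Fin n => idx j = i)).card := by
      refine Finset.sum_congr rfl fun i hi => ?_
      rw [Finset.mem_range] at hi
      rw [hn i, hfilter i (by omega)]
    rw [h2]
    exact h0.symm
  have hSqs : Sq s = 0 := by
    have h := (span_sum_card p s hp m hm s le_rfl).1
    simp only [Nat.sub_self, pow_zero, Finset.range_one, Finset.sum_singleton] at h
    rw [hSqdef]
    simp only []
    rw [show (∑ a ∈ Finset.univ.filter (· ∈ Ideal.span {(p : ZMod m) ^ s}), (leeW m a : ℚ))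
      = ((∑ a ∈ Finset.univ.filter (· ∈ Ideal.span {(p : ZMod m) ^ s}), leeW m a : ℕ) : ℚ) by
        push_cast; rfl]
    rw [h]
    simp
  have h1 : (∑ c ∈ Finset.univ.filter (· ∈ C), (leeWV m n c : ℚ)) / (Nat.card C : ℚ)
      = ∑ i ∈ Finset.range s, (nF i : ℚ) * Sq i := by
    rw [hmain, hgroup, Finset.sum_range_succ, hSqs, mul_zero, add_zero]
  have hnn : (n : ℚ) - (nF s : ℚ) = ∑ i ∈ Finset.range s, (nF i : ℚ) := by
    rw [Finset.sum_range_succ] at hsumn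
    have : ((∑ i ∈ Finset.range s, nF i : ℕ) : ℚ) + (nF s : ℚ) = (n : ℚ) := by
      exact_mod_cast congrArg (Nat.cast : ℕ → ℚ) hsumn
    push_cast at this ⊢
    linarith
  have hSqval : ∀ i < s, Sq i
      = ((p : ℚ) ^ i * ((∑ k ∈ Finset.range (p ^ (s - i)), min k (p ^ (s - i) - k) : ℕ) : ℚ))
        / (p : ℚ) ^ (s - i) := by
    intro i hi
    have h := (span_sum_card p s hp m hm i hi.le).1
    rw [hSqdef]
    simp only []
    rw [show (∑ a ∈ Finset.univ.filter (· ∈ Ideal.span {(p : ZMod m) ^ i}), (leeW m a : ℚ))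
      = ((∑ a ∈ Finset.univ.filter (· ∈ Ideal.span {(p : ZMod m) ^ i}), leeW m a : ℕ) : ℚ) by
        push_cast; rfl]
    rw [h]
    push_cast
    ring
  refine ⟨h1, ?_, ?_⟩
  · -- odd case
    intro hodd
    rw [h1]
    have hterm : ∀ i < s, Sq i = ((p : ℚ) ^ (2 * s) - (p : ℚ) ^ (2 * i)) / (4 * (p : ℚ) ^ s) := by
      intro i hi
      have hT := Tnat (p ^ (s - i))
      have hModd : (p ^ (s - i)) % 2 = 1 := by
        rw [Nat.odd_iff.mp (hodd.pow)]
      rw [hModd] at hT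
      have hTQ : 4 * ((∑ k ∈ Finset.range (p ^ (s - i)), min k (p ^ (s - i) - k) : ℕ) : ℚ) + 1
          = ((p : ℚ) ^ (s - i)) ^ 2 := by
        exact_mod_cast congrArg (Nat.cast : ℕ → ℚ) hT
      rw [hSqval i hi]
      have hM0 : (p : ℚ) ^ (s - i) ≠ 0 := pow_ne_zero _ hq0
      have hsplit : (p : ℚ) ^ s = (p : ℚ) ^ i * (p : ℚ) ^ (s - i) := by
        rw [← pow_add]; congr 1; omega
      have h2s : (p : ℚ) ^ (2 * s) = ((p : ℚ) ^ s) ^ 2 := by rw [mul_comm, pow_mul]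
      have h2i : (p : ℚ) ^ (2 * i) = ((p : ℚ) ^ i) ^ 2 := by rw [mul_comm, pow_mul]
      have hTQ' : ((∑ k ∈ Finset.range (p ^ (s - i)), min k (p ^ (s - i) - k) : ℕ) : ℚ)
          = (((p : ℚ) ^ (s - i)) ^ 2 - 1) / 4 := by linarith
      rw [hTQ', h2s, h2i, hsplit]
      have hpi0 : (p : ℚ) ^ i ≠ 0 := pow_ne_zero _ hq0
      field_simp
    rw [Finset.sum_congr rfl (fun i hi => by
      rw [hterm i (Finset.mem_range.mp hi)])]
    rw [hnn, Finset.mul_sum, ← Finset.sum_sub_distrib, Finset.mul_sum]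
    refine Finset.sum_congr rfl fun i hi => ?_
    have hps0 : (p : ℚ) ^ s ≠ 0 := pow_ne_zero _ hq0
    field_simp
  · -- p = 2
    intro hp2
    subst hp2
    rw [h1]
    have hterm : ∀ i < s, Sq i = (2 : ℚ) ^ s / 4 := by
      intro i hi
      have hT := Tnat (2 ^ (s - i))
      have hModd : (2 ^ (s - i)) % 2 = 0 := by
        have : 1 ≤ s - i := by omega
        have : (2 : ℕ) ∣ 2 ^ (s - i) := dvd_pow_self 2 (by omega)
        omega
      rw [hModd, add_zero] at hT
      have hTQ : 4 * ((∑ k ∈ Finset.range (2 ^ (s - i)), min k (2 ^ (s - i) - k) : ℕ) : ℚ)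
          = (((2 : ℕ) : ℚ) ^ (s - i)) ^ 2 := by
        exact_mod_cast congrArg (Nat.cast : ℕ → ℚ) hT
      have hTQ' : ((∑ k ∈ Finset.range (2 ^ (s - i)), min k (2 ^ (s - i) - k) : ℕ) : ℚ)
          = ((((2 : ℕ) : ℚ)) ^ (s - i)) ^ 2 / 4 := by linear_combination hTQ / 4
      rw [hSqval i hi, hTQ']
      have hM0 : (((2 : ℕ) : ℚ)) ^ (s - i) ≠ 0 := by positivity
      have hsplit : (((2 : ℕ) : ℚ)) ^ s = (((2 : ℕ) : ℚ)) ^ i * (((2 : ℕ) : ℚ)) ^ (s - i) := by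
        rw [← pow_add]; congr 1; omega
      push_cast at hsplit hM0 ⊢
      rw [hsplit]
      field_simp
    rw [Finset.sum_congr rfl (fun i hi => by rw [hterm i (Finset.mem_range.mp hi)])]
    rw [hnn, ← Finset.sum_mul]
    push_cast
    ring
end

section
/- Let C be a nonzero submodule of (Z/p^sZ)^n and suppose there exists y ∈ C with w_H(y) = d_H(C) and y ∈ ⟨p^{s-ℓ}⟩·(Z/p^sZ)^n for some ℓ ∈ {1,...,s}, where ℓ is the least integer with p^ℓ y = 0. Then d_L(C) ≤ A(p,s,ℓ)·d_H(C), where A(p,s,ℓ) = p^{s-ℓ}(p^ℓ+1)/4 if p is odd and A(2,s,ℓ) = 2^{s-2+ℓ}/(2^ℓ - 1). -/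
section Aux

lemma S_rec (N : ℕ) :
    ∑ i ∈ Finset.range (N + 2), min i (N + 2 - i)
      = (∑ i ∈ Finset.range N, min i (N - i)) + (N + 1) := by
  rw [Finset.sum_range_succ' (fun i => min i (N + 2 - i)) (N+1)]
  have h1 : ∀ i ∈ Finset.range (N+1), min (i+1) (N + 2 - (i+1)) = min i (N - i) + 1 := by
    intro i hi
    simp only [Finset.mem_range] at hi
    omega
  rw [Finset.sum_congr rfl h1, Finset.sum_add_distrib, Finset.sum_const, Finset.card_range]
  rw [Finset.sum_range_succ]
  simp

lemma S_bound : ∀ N : ℕ, 4 * (∑ i ∈ Finset.range N, min i (N - i)) + N % 2 ≤ N ^ 2 := by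
  intro N
  induction N using Nat.strong_induction_on with
  | _ N ih =>
    match N with
    | 0 => simp
    | 1 => simp
    | (N+2) =>
      have h := ih N (by omega)
      rw [S_rec]
      have : (N+2) % 2 = N % 2 := by omega
      nlinarith [h]

lemma sum_range_zmod (N : ℕ) [NeZero N] (F : ZMod N → ℕ) :
    ∑ t ∈ Finset.range N, F (t : ZMod N) = ∑ x : ZMod N, F x := by
  refine Finset.sum_nbij' (fun t => (t : ZMod N)) (fun x => x.val) ?_ ?_ ?_ ?_ ?_
  · intro a _; exact Finset.mem_univ _
  · intro x _; exact Finset.mem_range.2 x.val_lt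
  · intro a ha; exact ZMod.val_cast_of_lt (Finset.mem_range.1 ha)
  · intro x _; exact ZMod.natCast_rightInverse x
  · intro a _; rfl

lemma sum_mul_coprime (N B : ℕ) [NeZero N] (h : Nat.Coprime B N) (f : ℕ → ℕ) :
    ∑ t ∈ Finset.range N, f ((t * B) % N) = ∑ t ∈ Finset.range N, f (t % N) := by
  have key : ∀ t : ℕ, (t * B) % N = (((t : ZMod N) * (B : ZMod N)).val) := by
    intro t
    rw [← Nat.cast_mul, ZMod.val_natCast]
  have key2 : ∀ t : ℕ, t % N = ((t : ZMod N)).val := fun t => (ZMod.val_natCast _ t).symm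
  simp only [key, key2]
  rw [sum_range_zmod N (fun x => f ((x * (B : ZMod N)).val)),
      sum_range_zmod N (fun x => f x.val)]
  have := Equiv.sum_comp (Units.mulRight (ZMod.unitOfCoprime B h)) (fun x : ZMod N => f x.val)
  rw [← this]
  apply Finset.sum_congr rfl
  intro x _
  congr 2

lemma sum_range_mul_mod (a M : ℕ) (F : ℕ → ℕ) :
    ∑ t ∈ Finset.range (a * M), F (t % M) = a * ∑ t ∈ Finset.range M, F t := by
  induction a with
  | zero => simp
  | succ a ih =>
    rw [show (a + 1) * M = a * M + M by ring, Finset.sum_range_add, ih]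
    have h2 : ∀ i ∈ Finset.range M, F ((a * M + i) % M) = F i := by
      intro i hi
      rw [Nat.add_comm, Nat.add_mul_mod_self_right, Nat.mod_eq_of_lt (Finset.mem_range.1 hi)]
    rw [Finset.sum_congr rfl h2]
    ring

lemma KN (p : ℕ) (hp : p.Prime) :
    ∀ ℓ B : ℕ, 4 * ∑ t ∈ Finset.range (p ^ ℓ),
        min ((t * B) % p ^ ℓ) (p ^ ℓ - (t * B) % p ^ ℓ) ≤ p ^ (2 * ℓ) - p % 2 := by
  intro ℓ
  induction ℓ with
  | zero =>
    intro B
    simp only [pow_zero, Nat.mod_one]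
    simp
  | succ ℓ ih =>
    intro B
    have hp2 := hp.two_le
    have hNpos : (0:ℕ) < p ^ ℓ := pow_pos (by omega : 0 < p) _
    by_cases hd : p ∣ B
    · obtain ⟨B', rfl⟩ := hd
      have hmin : ∀ t : ℕ,
          min ((t * (p * B')) % p ^ (ℓ+1)) (p ^ (ℓ+1) - (t * (p * B')) % p ^ (ℓ+1))
            = (fun v => min ((v * B') % p ^ ℓ) (p ^ ℓ - (v * B') % p ^ ℓ) * p) t := by
        intro t
        simp only
        rw [pow_succ, show t * (p * B') = (t * B') * p by ring, Nat.mul_mod_mul_right,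
          ← Nat.sub_mul, min_mul_mul_right]
      have e0 : ∑ t ∈ Finset.range (p ^ (ℓ+1)),
          min ((t * (p * B')) % p ^ (ℓ+1)) (p ^ (ℓ+1) - (t * (p * B')) % p ^ (ℓ+1))
          = ∑ t ∈ Finset.range (p * p ^ ℓ),
            (fun v => min ((v * B') % p ^ ℓ) (p ^ ℓ - (v * B') % p ^ ℓ) * p) (t % p ^ ℓ) := by
        rw [show p * p ^ ℓ = p ^ (ℓ+1) from (pow_succ' p ℓ).symm]
        refine Finset.sum_congr rfl fun t _ => ?_
        rw [hmin t]
        simp only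
        congr 2 <;> rw [Nat.mod_mul_mod]
      have e1 := sum_range_mul_mod p (p ^ ℓ)
          (fun v => min ((v * B') % p ^ ℓ) (p ^ ℓ - (v * B') % p ^ ℓ) * p)
      rw [e0, e1]
      have e2 : ∑ v ∈ Finset.range (p ^ ℓ),
            (fun v => min ((v * B') % p ^ ℓ) (p ^ ℓ - (v * B') % p ^ ℓ) * p) v
          = (∑ v ∈ Finset.range (p ^ ℓ),
              min ((v * B') % p ^ ℓ) (p ^ ℓ - (v * B') % p ^ ℓ)) * p := by
        simp only
        rw [← Finset.sum_mul]
      rw [e2]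
      have hIH := ih B'
      calc 4 * (p * ((∑ v ∈ Finset.range (p ^ ℓ),
              min ((v * B') % p ^ ℓ) (p ^ ℓ - (v * B') % p ^ ℓ)) * p))
          = p * p * (4 * ∑ v ∈ Finset.range (p ^ ℓ),
              min ((v * B') % p ^ ℓ) (p ^ ℓ - (v * B') % p ^ ℓ)) := by ring
        _ ≤ p * p * (p ^ (2 * ℓ) - p % 2) := Nat.mul_le_mul_left _ hIH
        _ = p * p * p ^ (2 * ℓ) - p * p * (p % 2) := Nat.mul_sub _ _ _
        _ ≤ p * p * p ^ (2 * ℓ) - p % 2 :=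
            Nat.sub_le_sub_left (Nat.le_mul_of_pos_left _ (by positivity)) _
        _ = p ^ (2 * (ℓ + 1)) - p % 2 := by ring_nf
    · haveI : NeZero (p ^ (ℓ+1)) := ⟨by positivity⟩
      have hco : Nat.Coprime B (p ^ (ℓ+1)) :=
        Nat.Coprime.pow_right _ (((hp.coprime_iff_not_dvd).2 hd).symm)
      have e := sum_mul_coprime (p ^ (ℓ+1)) B hco
        (fun v => min v (p ^ (ℓ+1) - v))
      rw [e]
      have heq : ∀ t ∈ Finset.range (p ^ (ℓ+1)),
          min (t % p ^ (ℓ+1)) (p ^ (ℓ+1) - t % p ^ (ℓ+1)) = min t (p ^ (ℓ+1) - t) := by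
        intro t ht
        rw [Nat.mod_eq_of_lt (Finset.mem_range.1 ht)]
      rw [Finset.sum_congr rfl heq]
      have hS := S_bound (p ^ (ℓ+1))
      have hpar : p ^ (ℓ+1) % 2 = p % 2 := by
        rcases Nat.even_or_odd p with he | ho
        · obtain ⟨k, rfl⟩ := he
          have : (k + k) ^ (ℓ + 1) = 2 * ((k + k) ^ ℓ * k) := by ring
          omega
        · have h1 : Odd (p ^ (ℓ+1)) := ho.pow
          rcases h1 with ⟨a, ha⟩; rcases ho with ⟨b, hb⟩; omega
      have hsq : (p ^ (ℓ+1)) ^ 2 = p ^ (2 * (ℓ+1)) := by ring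
      omega

end Aux

/-- The minimum Hamming distance of a linear code. -/
noncomputable def dHam (m n : ℕ) (C : Submodule (ZMod m) (Fin n → ZMod m)) : ℕ :=
  sInf {w | ∃ c ∈ C, c ≠ 0 ∧ hammingNorm c = w}

/-- The constant `A(p,s,ℓ)`: `p^{s-ℓ}(p^ℓ+1)/4` for `p` odd,
`2^{s-2+ℓ}/(2^ℓ-1)` for `p = 2`. -/
noncomputable def Aps (p s ℓ : ℕ) : ℚ :=
  if p = 2 then (2 : ℚ) ^ (s + ℓ) / (4 * ((2 : ℚ) ^ ℓ - 1))
  else ((p : ℚ) ^ (s - ℓ) * ((p : ℚ) ^ ℓ + 1)) / 4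

lemma coord_bound (p s ℓ : ℕ) (hp : p.Prime) (hℓs : ℓ ≤ s) [NeZero (p ^ s)]
    (c : ZMod (p ^ s)) (b : ZMod (p ^ s)) (hc : c = (p : ZMod (p ^ s)) ^ (s - ℓ) * b) :
    4 * ∑ t ∈ Finset.range (p ^ ℓ), leeW (p ^ s) ((t : ZMod (p ^ s)) * c)
      ≤ (p ^ (2 * ℓ) - p % 2) * p ^ (s - ℓ) := by
  set B := b.val with hB
  have key : ∀ t : ℕ, leeW (p ^ s) ((t : ZMod (p ^ s)) * c)
      = min ((t * B) % p ^ ℓ) (p ^ ℓ - (t * B) % p ^ ℓ) * p ^ (s - ℓ) := by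
    intro t
    have hbb : ((B : ℕ) : ZMod (p ^ s)) = b := ZMod.natCast_rightInverse b
    have h1 : (t : ZMod (p ^ s)) * c = ((t * (B * p ^ (s - ℓ)) : ℕ) : ZMod (p ^ s)) := by
      rw [hc, ← hbb]; push_cast; ring
    rw [h1]
    unfold leeW
    rw [ZMod.val_natCast]
    have hms : p ^ s = p ^ ℓ * p ^ (s - ℓ) := by rw [← pow_add]; congr 1; omega
    rw [show t * (B * p ^ (s - ℓ)) = (t * B) * p ^ (s - ℓ) by ring, hms, Nat.mul_mod_mul_right,
      ← Nat.sub_mul, min_mul_mul_right]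
  rw [Finset.sum_congr rfl (fun t _ => key t), ← Finset.sum_mul, ← Nat.mul_assoc]
  exact Nat.mul_le_mul_right _ (KN p hp ℓ B)

/-- If `C` contains a word `y` of minimal Hamming weight with `y ∈ ⟨p^{s-ℓ}⟩` and `ℓ`
the least integer with `p^ℓ y = 0`, then `d_L(C) ≤ A(p,s,ℓ)·d_H(C)`. -/
theorem lee_from_hamming_bound (p s n ℓ : ℕ) (hp : p.Prime) (hs : 0 < s)
    (m : ℕ) (hm : m = p ^ s) [NeZero m]
    (C : Submodule (ZMod m) (Fin n → ZMod m)) (hC : C ≠ ⊥)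
    (hℓ1 : 1 ≤ ℓ) (hℓs : ℓ ≤ s)
    (y : Fin n → ZMod m) (hyC : y ∈ C) (hy0 : y ≠ 0)
    (hyH : hammingNorm y = dHam m n C)
    (hyI : ∀ j, y j ∈ Ideal.span {(p : ZMod m) ^ (s - ℓ)})
    (hkill : ((p : ZMod m) ^ ℓ) • y = 0)
    (hleast : ∀ ℓ' < ℓ, ((p : ZMod m) ^ ℓ') • y ≠ 0) :
    (dLee m n C : ℚ) ≤ Aps p s ℓ * (dHam m n C : ℚ) := by
  subst hm
  have hp2 := hp.two_le
  have hN1 : 1 ≤ p ^ ℓ := Nat.one_le_pow _ _ (by omega)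
  -- nonzero multiples
  have hne : ∀ t ∈ Finset.Ico 1 (p ^ ℓ), ((t : ℕ) : ZMod (p ^ s)) • y ≠ 0 := by
    intro t ht h0
    simp only [Finset.mem_Ico] at ht
    have ht0 : t ≠ 0 := by omega
    have hdvd : p ^ (t.factorization p) ∣ t := Nat.ordProj_dvd t p
    have haℓ : t.factorization p < ℓ := by
      by_contra hcon
      push_neg at hcon
      have h5 : p ^ ℓ ∣ t := dvd_trans (pow_dvd_pow p hcon) hdvd
      have := Nat.le_of_dvd (by omega) h5
      omega
    have hcu : Nat.Coprime p (t / p ^ t.factorization p) := Nat.coprime_ordCompl hp ht0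
    have hcu2 : Nat.Coprime (t / p ^ t.factorization p) (p ^ s) :=
      Nat.Coprime.pow_right _ hcu.symm
    set v : (ZMod (p ^ s))ˣ := ZMod.unitOfCoprime _ hcu2 with hv
    have hdecomp : p ^ t.factorization p * (t / p ^ t.factorization p) = t :=
      Nat.ordProj_mul_ordCompl_eq_self t p
    have hcast : ((t : ℕ) : ZMod (p ^ s))
        = (p : ZMod (p ^ s)) ^ t.factorization p * (v : ZMod (p ^ s)) := by
      rw [hv, ZMod.coe_unitOfCoprime]
      have h6 := congrArg (fun k : ℕ => (k : ZMod (p ^ s))) hdecomp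
      push_cast at h6
      exact h6.symm
    have h2 : ((v⁻¹ : (ZMod (p ^ s))ˣ) : ZMod (p ^ s)) • (((t : ℕ) : ZMod (p ^ s)) • y) = 0 := by
      rw [h0, smul_zero]
    rw [smul_smul, hcast, show ((v⁻¹ : (ZMod (p ^ s))ˣ) : ZMod (p ^ s)) *
        ((p : ZMod (p ^ s)) ^ t.factorization p * (v : ZMod (p ^ s)))
          = (p : ZMod (p ^ s)) ^ t.factorization p by
      rw [mul_comm ((p : ZMod (p ^ s)) ^ t.factorization p) _, ← mul_assoc,
        Units.inv_mul, one_mul]] at h2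
    exact hleast _ haℓ h2
  -- dLee ≤ each multiple's weight
  have hbound : ∀ t ∈ Finset.Ico 1 (p ^ ℓ),
      dLee (p ^ s) n C ≤ leeWV (p ^ s) n (((t : ℕ) : ZMod (p ^ s)) • y) := by
    intro t ht
    exact Nat.sInf_le ⟨((t : ℕ) : ZMod (p ^ s)) • y,
      Submodule.smul_mem C _ hyC, hne t ht, rfl⟩
  have hsum1 : (p ^ ℓ - 1) * dLee (p ^ s) n C
      ≤ ∑ t ∈ Finset.Ico 1 (p ^ ℓ), leeWV (p ^ s) n (((t : ℕ) : ZMod (p ^ s)) • y) := by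
    have := Finset.card_nsmul_le_sum (Finset.Ico 1 (p ^ ℓ))
      (fun t => leeWV (p ^ s) n (((t : ℕ) : ZMod (p ^ s)) • y)) (dLee (p ^ s) n C) hbound
    simpa [Nat.card_Ico, smul_eq_mul] using this
  have hsum2 : ∑ t ∈ Finset.Ico 1 (p ^ ℓ), leeWV (p ^ s) n (((t : ℕ) : ZMod (p ^ s)) • y)
      ≤ ∑ t ∈ Finset.range (p ^ ℓ), leeWV (p ^ s) n (((t : ℕ) : ZMod (p ^ s)) • y) := by
    apply Finset.sum_le_sum_of_subset
    rw [Finset.range_eq_Ico]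
    exact Finset.Ico_subset_Ico (by omega) le_rfl
  -- swap and bound per coordinate
  have hswap : ∑ t ∈ Finset.range (p ^ ℓ), leeWV (p ^ s) n (((t : ℕ) : ZMod (p ^ s)) • y)
      = ∑ i : Fin n, ∑ t ∈ Finset.range (p ^ ℓ), leeW (p ^ s) ((t : ZMod (p ^ s)) * y i) := by
    unfold leeWV
    rw [Finset.sum_comm]
    apply Finset.sum_congr rfl
    intro i _
    apply Finset.sum_congr rfl
    intro t _
    congr 1
  have hcoord : ∀ i : Fin n,
      4 * ∑ t ∈ Finset.range (p ^ ℓ), leeW (p ^ s) ((t : ZMod (p ^ s)) * y i)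
        ≤ (p ^ (2 * ℓ) - p % 2) * p ^ (s - ℓ) := by
    intro i
    have h7 := hyI i
    rw [Ideal.mem_span_singleton] at h7
    obtain ⟨b, hb⟩ := h7
    exact coord_bound p s ℓ hp hℓs (y i) b hb
  have hzero : ∀ i : Fin n, y i = 0 →
      (∑ t ∈ Finset.range (p ^ ℓ), leeW (p ^ s) ((t : ZMod (p ^ s)) * y i)) = 0 := by
    intro i hi
    apply Finset.sum_eq_zero
    intro t _
    rw [hi, mul_zero]
    simp [leeW, ZMod.val_zero]
  have hsupp : ∑ i : Fin n,
      (4 * ∑ t ∈ Finset.range (p ^ ℓ), leeW (p ^ s) ((t : ZMod (p ^ s)) * y i))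
      ≤ hammingNorm y * ((p ^ (2 * ℓ) - p % 2) * p ^ (s - ℓ)) := by
    have e1 : ∑ i : Fin n,
        (4 * ∑ t ∈ Finset.range (p ^ ℓ), leeW (p ^ s) ((t : ZMod (p ^ s)) * y i))
        = ∑ i ∈ Finset.univ.filter (fun i => y i ≠ 0),
          (4 * ∑ t ∈ Finset.range (p ^ ℓ), leeW (p ^ s) ((t : ZMod (p ^ s)) * y i)) := by
      symm
      apply Finset.sum_subset (Finset.filter_subset _ _)
      intro i _ hi
      simp only [Finset.mem_filter, Finset.mem_univ, true_and, not_not] at hi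
      rw [hzero i hi, Nat.mul_zero]
    rw [e1]
    have hcard : (Finset.univ.filter (fun i => y i ≠ 0)).card = hammingNorm y := rfl
    calc ∑ i ∈ Finset.univ.filter (fun i => y i ≠ 0),
          (4 * ∑ t ∈ Finset.range (p ^ ℓ), leeW (p ^ s) ((t : ZMod (p ^ s)) * y i))
        ≤ ∑ _i ∈ Finset.univ.filter (fun i => y i ≠ 0),
          ((p ^ (2 * ℓ) - p % 2) * p ^ (s - ℓ)) :=
          Finset.sum_le_sum (fun i _ => hcoord i)
      _ = hammingNorm y * ((p ^ (2 * ℓ) - p % 2) * p ^ (s - ℓ)) := by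
          rw [Finset.sum_const, smul_eq_mul, hcard]
  -- combine in ℕ
  have hkey : 4 * ((p ^ ℓ - 1) * dLee (p ^ s) n C)
      ≤ dHam (p ^ s) n C * ((p ^ (2 * ℓ) - p % 2) * p ^ (s - ℓ)) := by
    calc 4 * ((p ^ ℓ - 1) * dLee (p ^ s) n C)
        ≤ 4 * ∑ t ∈ Finset.range (p ^ ℓ), leeWV (p ^ s) n (((t : ℕ) : ZMod (p ^ s)) • y) :=
          Nat.mul_le_mul_left _ (le_trans hsum1 hsum2)
      _ = ∑ i : Fin n,
          (4 * ∑ t ∈ Finset.range (p ^ ℓ), leeW (p ^ s) ((t : ZMod (p ^ s)) * y i)) := by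
          rw [hswap, Finset.mul_sum]
      _ ≤ hammingNorm y * ((p ^ (2 * ℓ) - p % 2) * p ^ (s - ℓ)) := hsupp
      _ = dHam (p ^ s) n C * ((p ^ (2 * ℓ) - p % 2) * p ^ (s - ℓ)) := by rw [hyH]
  -- pass to ℚ
  set L : ℚ := (dLee (p ^ s) n C : ℚ) with hL
  set D : ℚ := (dHam (p ^ s) n C : ℚ) with hD
  have hLpos : (0:ℚ) ≤ L := by positivity
  have hDpos : (0:ℚ) ≤ D := by positivity
  have hx1 : (1:ℚ) < (p : ℚ) ^ ℓ := by
    apply one_lt_pow₀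
    · exact_mod_cast by omega
    · omega
  by_cases hp2' : p = 2
  · subst hp2'
    have hmod : (2 : ℕ) % 2 = 0 := rfl
    rw [hmod, Nat.sub_zero] at hkey
    have hq : 4 * (((2:ℚ) ^ ℓ - 1) * L) ≤ D * ((2:ℚ) ^ (2 * ℓ) * (2:ℚ) ^ (s - ℓ)) := by
      have h := (Nat.cast_le (α := ℚ)).2 hkey
      push_cast [Nat.cast_sub hN1] at h
      linarith [h]
    rw [show Aps 2 s ℓ = (2:ℚ) ^ (s + ℓ) / (4 * ((2:ℚ) ^ ℓ - 1)) from by simp [Aps]]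
    have hx1' : (1:ℚ) < (2:ℚ) ^ ℓ := by exact_mod_cast hx1
    have hx0 : (0:ℚ) < (2:ℚ) ^ ℓ - 1 := by linarith
    rw [div_mul_eq_mul_div, le_div_iff₀ (by linarith)]
    have hpow : (2:ℚ) ^ (2 * ℓ) * (2:ℚ) ^ (s - ℓ) = (2:ℚ) ^ (s + ℓ) := by
      rw [← pow_add]; congr 1; omega
    calc L * (4 * ((2:ℚ) ^ ℓ - 1)) = 4 * (((2:ℚ) ^ ℓ - 1) * L) := by ring
      _ ≤ D * ((2:ℚ) ^ (2 * ℓ) * (2:ℚ) ^ (s - ℓ)) := hq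
      _ = (2:ℚ) ^ (s + ℓ) * D := by rw [hpow]; ring
  · have hmod : p % 2 = 1 := Nat.odd_iff.1 (hp.odd_of_ne_two hp2')
    rw [hmod] at hkey
    have h1le : (1:ℕ) ≤ p ^ (2 * ℓ) := Nat.one_le_pow _ _ (by omega)
    have hq : 4 * (((p:ℚ) ^ ℓ - 1) * L)
        ≤ D * (((p:ℚ) ^ (2 * ℓ) - 1) * (p:ℚ) ^ (s - ℓ)) := by
      have h := (Nat.cast_le (α := ℚ)).2 hkey
      push_cast [Nat.cast_sub hN1, Nat.cast_sub h1le] at h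
      linarith [h]
    simp only [Aps, if_neg hp2']
    rw [div_mul_eq_mul_div, le_div_iff₀ (by norm_num)]
    have hx0 : (0:ℚ) < (p:ℚ) ^ ℓ - 1 := by linarith
    have hexp : ((p:ℚ) ^ (2 * ℓ) - 1) = ((p:ℚ) ^ ℓ - 1) * ((p:ℚ) ^ ℓ + 1) := by
      rw [two_mul, pow_add]; ring
    have h3 : 4 * L * ((p:ℚ) ^ ℓ - 1)
        ≤ (p:ℚ) ^ (s - ℓ) * ((p:ℚ) ^ ℓ + 1) * D * ((p:ℚ) ^ ℓ - 1) := by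
      calc 4 * L * ((p:ℚ) ^ ℓ - 1) = 4 * (((p:ℚ) ^ ℓ - 1) * L) := by ring
        _ ≤ D * (((p:ℚ) ^ (2 * ℓ) - 1) * (p:ℚ) ^ (s - ℓ)) := hq
        _ = (p:ℚ) ^ (s - ℓ) * ((p:ℚ) ^ ℓ + 1) * D * ((p:ℚ) ^ ℓ - 1) := by
            rw [hexp]; ring
    have h4 := (mul_le_mul_iff_of_pos_right hx0).1 h3
    linarith
end

section
/- For any submodule C of (Z/p^sZ)^n with at least two elements, d_L(C) ≤ A(p,s,1)·d_H(C), where A(p,s,1) = p^{s-1}(p+1)/4 for p odd and A(2,s,1) = 2^{s-1}. -/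
open Finset

/-- The constant `A(p,s,1)`: `p^{s-1}(p+1)/4` for `p` odd, `2^{s-1}` for `p = 2`. -/
noncomputable def Aps1 (p s : ℕ) : ℚ :=
  if p = 2 then (2 : ℚ) ^ (s - 1)
  else ((p : ℚ) ^ (s - 1) * ((p : ℚ) + 1)) / 4

lemma Tval (k : ℕ) : ∑ j ∈ range (2*k+1), min j (2*k+1 - j) = k*(k+1) := by
  have h : (2*k+1) = (k+1) + k := by omega
  rw [h, Finset.sum_range_add]
  have h1 : ∑ j ∈ range (k+1), min j ((k+1)+k - j) = ∑ j ∈ range (k+1), j := by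
    apply Finset.sum_congr rfl
    intro j hj; simp only [mem_range] at hj; omega
  have h2 : ∑ j ∈ range k, min ((k+1)+j) ((k+1)+k - ((k+1)+j)) = ∑ j ∈ range k, (k - j) := by
    apply Finset.sum_congr rfl
    intro j hj; simp only [mem_range] at hj; omega
  rw [h1, h2]
  have h3 : ∑ j ∈ range k, (k - j) = ∑ j ∈ range k, (j+1) := by
    rw [← Finset.sum_range_reflect]
    apply Finset.sum_congr rfl
    intro j hj; simp only [mem_range] at hj; omega
  have h4 : (∑ j ∈ range (k+1), j) * 2 = (k+1) * ((k+1)-1) := Finset.sum_range_id_mul_two _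
  have h5 : ∑ j ∈ range k, (j+1) = (∑ j ∈ range k, j) + k := by
    rw [Finset.sum_add_distrib]; simp
  have h6 : (∑ j ∈ range k, j) * 2 = k * (k-1) := Finset.sum_range_id_mul_two _
  rw [h3, h5]
  cases k with
  | zero => simp
  | succ l => simp only [Nat.add_sub_cancel] at h4 h6; nlinarith [h4, h6]

lemma mult_sum (p b : ℕ) (hp : 0 < p) (f : ℕ → ℕ) :
    ∑ j ∈ (range (p*b)).filter (fun j => p ∣ j), f j = ∑ k ∈ range b, f (p*k) := by
  apply Finset.sum_nbij' (fun j => j / p) (fun k => p * k)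
  · intro j hj
    simp only [mem_filter, mem_range] at hj
    simp only [mem_range]
    obtain ⟨h1, c, rfl⟩ := hj
    rw [Nat.mul_div_cancel_left _ hp]
    exact lt_of_mul_lt_mul_left h1 (le_of_lt hp)
  · intro k hk
    simp only [mem_range] at hk
    simp only [mem_filter, mem_range]
    exact ⟨by exact (Nat.mul_lt_mul_left hp).mpr hk, Dvd.intro _ rfl⟩
  · intro j hj
    simp only [mem_filter, mem_range] at hj
    obtain ⟨h1, c, rfl⟩ := hj
    rw [Nat.mul_div_cancel_left _ hp]
  · intro k hk
    rw [Nat.mul_div_cancel_left _ hp]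
  · intro j hj
    simp only [mem_filter, mem_range] at hj
    obtain ⟨h1, c, rfl⟩ := hj
    rw [Nat.mul_div_cancel_left _ hp]

lemma periodic_sum (b : ℕ) (G : ℕ → ℕ) (hG : ∀ x, G x = G (x % b)) (k : ℕ) :
    ∑ x ∈ range (k*b), G x = k * ∑ j ∈ range b, G j := by
  induction k with
  | zero => simp
  | succ l ih =>
    have h : (l+1)*b = l*b + b := by ring
    rw [h, Finset.sum_range_add, ih]
    have h2 : ∑ x ∈ range b, G (l*b + x) = ∑ j ∈ range b, G j := by
      apply Finset.sum_congr rfl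
      intro j hj
      simp only [mem_range] at hj
      rw [hG (l*b + j), Nat.mul_comm, Nat.mul_add_mod, Nat.mod_eq_of_lt hj]
    rw [h2]; ring

lemma min_mul_right' (a b c : ℕ) : min (a*c) (b*c) = min a b * c := by
  rcases le_total a b with h | h
  · rw [min_eq_left h, min_eq_left (Nat.mul_le_mul_right c h)]
  · rw [min_eq_right h, min_eq_right (Nat.mul_le_mul_right c h)]

lemma Tsq (M : ℕ) (hM : Odd M) : 4 * (∑ j ∈ range M, min j (M - j)) + 1 = M * M := by
  obtain ⟨k, hk⟩ := hM
  subst hk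
  rw [Tval]
  ring

lemma Sval (p r : ℕ) (hp : 2 ≤ p) (hodd : Odd p) (hr : 0 < r) :
    4 * (∑ j ∈ (range (p^r)).filter (fun j => ¬ p ∣ j), min j (p^r - j))
      + p * (p^(r-1) * p^(r-1)) = p^r * p^r + p - 1 := by
  set T := ∑ j ∈ range (p^r), min j (p^r - j) with hT
  set S := ∑ j ∈ (range (p^r)).filter (fun j => ¬ p ∣ j), min j (p^r - j) with hS
  set Sm := ∑ j ∈ (range (p^r)).filter (fun j => p ∣ j), min j (p^r - j) with hSm
  have hsplit : Sm + S = T := Finset.sum_filter_add_sum_filter_not _ _ _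
  have hpr : p^r = p * p^(r-1) := by
    conv_lhs => rw [show r = 1 + (r-1) by omega]
    rw [pow_add, pow_one]
  have hSm2 : Sm = p * ∑ k ∈ range (p^(r-1)), min k (p^(r-1) - k) := by
    rw [hSm]
    conv_lhs => rw [hpr]
    rw [mult_sum p (p^(r-1)) (by omega)]
    rw [Finset.mul_sum]
    apply Finset.sum_congr rfl
    intro k hk
    rw [← Nat.mul_sub, mul_min_of_nonneg _ _ (Nat.zero_le p)]
  have hTsq := Tsq (p^r) (hodd.pow)
  have hT'sq := Tsq (p^(r-1)) (hodd.pow)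
  rw [← hT] at hTsq
  set T' := ∑ k ∈ range (p^(r-1)), min k (p^(r-1) - k) with hT'
  have h7 : 4 * Sm + p = p * (p^(r-1) * p^(r-1)) := by
    rw [hSm2, ← hT'sq]; ring
  omega

lemma sum_units_eq (m : ℕ) [NeZero m] (f : ZMod m → ℕ) :
    ∑ u : (ZMod m)ˣ, f (u : ZMod m)
      = ∑ x ∈ (range m).filter (fun x => Nat.Coprime x m), f (x : ZMod m) := by
  apply Finset.sum_bij' (i := fun (u : (ZMod m)ˣ) _ => (u : ZMod m).val)
    (j := fun x hx => ZMod.unitOfCoprime x (by simpa using (Finset.mem_filter.mp hx).2))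
  case hi => intro u _; simp only [mem_filter, mem_range]
             exact ⟨ZMod.val_lt _, ZMod.val_coe_unit_coprime u⟩
  case hj => intro x hx; exact Finset.mem_univ _
  case left_neg =>
    intro u _
    apply Units.ext
    simp [ZMod.unitOfCoprime, ZMod.natCast_val, ZMod.cast_id]
  case right_neg =>
    intro x hx
    simp only [mem_filter, mem_range] at hx
    simp [ZMod.unitOfCoprime, ZMod.val_cast_of_lt hx.1]
  case h =>
    intro u _
    congr 1
    simp [ZMod.natCast_val, ZMod.cast_id]

lemma leeW_cast_mul (p t r : ℕ) (m : ℕ) (hm : m = p^r * p^t) [NeZero m] (x : ℕ) :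
    leeW m ((x : ZMod m) * (p : ZMod m)^t)
      = min (x % p^r) (p^r - x % p^r) * p^t := by
  have hcast : (x : ZMod m) * (p : ZMod m)^t = ((x * p^t : ℕ) : ZMod m) := by push_cast; ring
  rw [hcast]
  unfold leeW
  rw [ZMod.val_natCast]
  subst hm
  rw [Nat.mul_mod_mul_right, ← Nat.sub_mul, min_mul_right']

/-- Key per-coordinate averaged bound for odd `p`. -/
lemma key_coord (p s : ℕ) (hp : p.Prime) (hp2 : p ≠ 2) (hs : 0 < s)
    (m : ℕ) (hm : m = p ^ s) [NeZero m] (a : ZMod m) (ha : a ≠ 0) :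
    4 * ∑ u : (ZMod m)ˣ, leeW m ((u : ZMod m) * a)
      ≤ m.totient * (p^(s-1) * (p+1)) := by
  have hp2' : 2 ≤ p := hp.two_le
  have hodd : Odd p := hp.odd_of_ne_two hp2
  have hval : a.val ≠ 0 := by
    intro h
    exact ha ((ZMod.val_eq_zero a).mp h)
  set t := a.val.factorization p with htdef
  have hdvd : p ^ t ∣ a.val := Nat.ordProj_dvd _ _
  have hndvd : ¬ p ^ (t+1) ∣ a.val := Nat.pow_succ_factorization_not_dvd hval hp
  obtain ⟨w, hw⟩ := hdvd
  have hpw : ¬ p ∣ w := by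
    intro ⟨c, hc⟩
    exact hndvd ⟨c, by rw [hw, hc]; ring⟩
  have hts : t < s := by
    by_contra h
    push_neg at h
    apply hndvd
    calc p ^ (t+1) ∣ p ^ t * p := dvd_refl _
    _ ∣ a.val := by
        exfalso
        have h1 : p ^ s ≤ p ^ t := Nat.pow_le_pow_right (by omega) h
        have h2 : p ^ t ≤ a.val := Nat.le_of_dvd (Nat.pos_of_ne_zero hval) ⟨w, hw⟩
        have h3 : a.val < m := ZMod.val_lt a
        omega
  set r := s - t with hrdef
  have hr : 0 < r := by omega
  have hmrt : m = p^r * p^t := by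
    rw [hm, ← pow_add]; congr 1; omega
  have hwm : Nat.Coprime w m := by
    rw [hm, Nat.coprime_comm]
    exact Nat.Coprime.pow_left _ (hp.coprime_iff_not_dvd.mpr hpw)
  have hεu : IsUnit ((w : ZMod m)) := (ZMod.isUnit_iff_coprime w m).mpr hwm
  obtain ⟨U, hU⟩ := hεu
  have ha2 : a = (w : ZMod m) * (p : ZMod m)^t := by
    have h0 : ((a.val : ℕ) : ZMod m) = a := by simp [ZMod.natCast_val, ZMod.cast_id]
    rw [← h0, hw]
    push_cast
    ring
  -- reindex the sum over units
  have hre : ∑ u : (ZMod m)ˣ, leeW m ((u : ZMod m) * a)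
      = ∑ u : (ZMod m)ˣ, leeW m ((u : ZMod m) * (p : ZMod m)^t) := by
    apply Fintype.sum_equiv (Equiv.mulRight U)
    intro u
    simp only [Equiv.coe_mulRight]
    rw [ha2, ← hU]
    push_cast
    ring_nf
  rw [hre, sum_units_eq m (fun b => leeW m (b * (p : ZMod m)^t))]
  have hfilter : (range m).filter (fun x => Nat.Coprime x m)
      = (range m).filter (fun x => ¬ p ∣ x) := by
    apply Finset.filter_congr
    intro x _
    rw [hm, Nat.coprime_pow_right_iff hs, Nat.coprime_comm]
    simp [hp.coprime_iff_not_dvd]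
  rw [hfilter]
  have hlee : ∀ x : ℕ, leeW m ((x : ZMod m) * (p : ZMod m)^t)
      = min (x % p^r) (p^r - x % p^r) * p^t := fun x => leeW_cast_mul p t r m hmrt x
  set G : ℕ → ℕ := fun x => if ¬ p ∣ x then min (x % p^r) (p^r - x % p^r) * p^t else 0
    with hGdef
  have hsum1 : ∑ x ∈ (range m).filter (fun x => ¬ p ∣ x),
      leeW m ((x : ZMod m) * (p : ZMod m)^t) = ∑ x ∈ range m, G x := by
    rw [Finset.sum_filter]
    apply Finset.sum_congr rfl
    intro x _
    by_cases h : p ∣ x <;> simp [hGdef, h, hlee x]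
  rw [hsum1]
  have hGper : ∀ x, G x = G (x % p^r) := by
    intro x
    have hd : p ∣ p^r := dvd_pow_self p hr.ne'
    have h1 : (p ∣ x % p^r) ↔ p ∣ x := Nat.dvd_mod_iff hd
    have h2 : x % p^r % p^r = x % p^r := Nat.mod_mod_of_dvd x (dvd_refl _)
    simp only [hGdef, h1, h2]
  have hsum2 : ∑ x ∈ range m, G x = p^t * ∑ j ∈ range (p^r), G j := by
    have : m = p^t * p^r := by rw [hmrt]; ring
    rw [this]
    exact periodic_sum (p^r) G hGper (p^t)
  rw [hsum2]
  set S := ∑ j ∈ (range (p^r)).filter (fun j => ¬ p ∣ j), min j (p^r - j) with hSdef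
  have hsum3 : ∑ j ∈ range (p^r), G j = S * p^t := by
    rw [hSdef, Finset.sum_mul, Finset.sum_filter]
    apply Finset.sum_congr rfl
    intro j hj
    simp only [mem_range] at hj
    have : j % p^r = j := Nat.mod_eq_of_lt hj
    by_cases h : p ∣ j <;> simp [hGdef, h, this]
  rw [hsum3]
  -- now pure arithmetic
  have hSval := Sval p r hp2' hodd hr
  rw [← hSdef] at hSval
  set Q := p^(r-1) * p^(r-1) with hQdef
  have hQ1 : 1 ≤ Q := Nat.one_le_iff_ne_zero.mpr (by positivity)
  have hprQ : p^r * p^r = p * p * Q := by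
    rw [hQdef]
    have : p^r = p * p^(r-1) := by
      conv_lhs => rw [show r = 1 + (r-1) by omega]
      rw [pow_add, pow_one]
    rw [this]; ring
  rw [hprQ] at hSval
  have hSb : 4 * S ≤ Q * (p * p - 1) := by
    have hle : Q ≤ Q * (p * p) := Nat.le_mul_of_pos_right _ (by positivity)
    have e2 : Q * (p * p - 1) = Q * (p * p) - Q := by
      rw [Nat.mul_sub, mul_one]
    rw [e2, Nat.le_sub_iff_add_le hle]
    have h1 : 1 ≤ p * p * Q + p := le_trans (by omega : 1 ≤ p) (Nat.le_add_left p _)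
    have hSval' : 4 * S + p * Q + 1 = p * p * Q + p := by
      rw [hSval, Nat.sub_add_cancel h1]
    obtain ⟨q, hq⟩ : ∃ q, Q = q + 1 := ⟨Q - 1, by omega⟩
    have hqle : q ≤ p * q := Nat.le_mul_of_pos_left q (by omega)
    nlinarith [hSval', hqle, hq]
  have htot : m.totient = p^(s-1) * (p-1) := by
    rw [hm, Nat.totient_prime_pow hp hs]
  rw [htot]
  have hps1 : p^(s-1) = p^t * p^(r-1) := by
    rw [← pow_add]; congr 1; omega
  calc 4 * (p ^ t * (S * p ^ t)) = (p^t * p^t) * (4 * S) := by ring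
    _ ≤ (p^t * p^t) * (Q * (p * p - 1)) := Nat.mul_le_mul_left _ hSb
    _ = p ^ (s - 1) * (p - 1) * (p ^ (s - 1) * (p + 1)) := by
        rw [hps1, hQdef]
        have hpp0 : (p - 1) * (p + 1) + 1 = p * p := by
          obtain ⟨q, rfl⟩ := Nat.exists_eq_add_of_le hp2'
          have h21 : 2 + q - 1 = q + 1 := by omega
          rw [h21]; ring
        have hpp : p * p - 1 = (p - 1) * (p + 1) := by
          rw [← hpp0, Nat.add_sub_cancel]
        rw [hpp]; ring

/-- For any submodule `C` of `(ℤ/p^sℤ)^n` with at least two elements,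
`d_L(C) ≤ A(p,s,1)·d_H(C)`. -/
theorem lee_from_hamming_ell_one (p s n : ℕ) (hp : p.Prime) (hs : 0 < s)
    (m : ℕ) (hm : m = p ^ s) [NeZero m]
    (C : Submodule (ZMod m) (Fin n → ZMod m)) (hC : 2 ≤ Nat.card C) :
    (dLee m n C : ℚ) ≤ Aps1 p s * (dHam m n C : ℚ) := by
  -- find a nonzero codeword
  have hex : ∃ c ∈ C, c ≠ 0 := by
    by_contra h
    push_neg at h
    have hbot : C = ⊥ := (Submodule.eq_bot_iff C).mpr h
    rw [hbot] at hC
    simp [Nat.card_unique] at hC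
  have hne : {w | ∃ c ∈ C, c ≠ 0 ∧ hammingNorm c = w}.Nonempty := by
    obtain ⟨c, hc, hc0⟩ := hex
    exact ⟨hammingNorm c, c, hc, hc0, rfl⟩
  obtain ⟨c₀, hc₀C, hc₀ne, hc₀H⟩ := Nat.sInf_mem hne
  have hdH : hammingNorm c₀ = dHam m n C := hc₀H
  have hm2 : 2 ≤ m := by
    rw [hm]
    calc 2 ≤ p := hp.two_le
    _ = p^1 := (pow_one p).symm
    _ ≤ p^s := Nat.pow_le_pow_right hp.pos hs
  by_cases hp2 : p = 2
  · -- p = 2 : trivial bound leeW ≤ 2^(s-1)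
    have hm' : m = 2 * 2^(s-1) := by
      rw [hm, hp2]
      conv_lhs => rw [show s = 1 + (s-1) by omega]
      rw [pow_add, pow_one]
    have hkey : ∀ a : ZMod m, leeW m a ≤ if a ≠ 0 then 2^(s-1) else 0 := by
      intro a
      by_cases h : a = 0
      · simp [h, leeW, ZMod.val_zero]
      · simp only [h, ne_eq, not_false_eq_true, if_true]
        have hv : a.val < m := ZMod.val_lt a
        unfold leeW
        rcases le_total a.val (2^(s-1)) with h' | h'
        · exact le_trans (min_le_left _ _) h'
        · exact le_trans (min_le_right _ _) (by omega)
    have hL : leeWV m n c₀ ≤ 2^(s-1) * dHam m n C := by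
      unfold leeWV
      calc ∑ i, leeW m (c₀ i) ≤ ∑ i, if c₀ i ≠ 0 then 2^(s-1) else 0 :=
            Finset.sum_le_sum (fun i _ => hkey (c₀ i))
        _ = (Finset.univ.filter (fun i => c₀ i ≠ 0)).card * 2^(s-1) := by
            rw [Finset.sum_ite, Finset.sum_const, Finset.sum_const]; simp
        _ = 2^(s-1) * dHam m n C := by
            rw [← hdH]; unfold hammingNorm; ring
    have hdL : dLee m n C ≤ 2^(s-1) * dHam m n C :=
      le_trans (Nat.sInf_le ⟨c₀, hc₀C, hc₀ne, rfl⟩) hL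
    rw [Aps1, if_pos hp2]
    have := (Nat.cast_le (α := ℚ)).mpr hdL
    push_cast at this
    calc (dLee m n C : ℚ) ≤ 2^(s-1) * (dHam m n C : ℚ) := this
      _ = (2:ℚ)^(s-1) * (dHam m n C : ℚ) := by norm_num
  · -- p odd : averaging over units
    set B := p^(s-1) * (p+1) with hBdef
    have hmain : ∑ u : (ZMod m)ˣ, 4 * leeWV m n ((u : ZMod m) • c₀)
        ≤ ∑ _u : (ZMod m)ˣ, B * dHam m n C := by
      have hswap : ∑ u : (ZMod m)ˣ, 4 * leeWV m n ((u : ZMod m) • c₀)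
          = ∑ i, 4 * ∑ u : (ZMod m)ˣ, leeW m ((u : ZMod m) * c₀ i) := by
        simp only [leeWV, Finset.mul_sum, Pi.smul_apply, smul_eq_mul]
        rw [Finset.sum_comm]
      rw [hswap]
      have hbound : ∀ i : Fin n, 4 * ∑ u : (ZMod m)ˣ, leeW m ((u : ZMod m) * c₀ i)
          ≤ if c₀ i ≠ 0 then m.totient * B else 0 := by
        intro i
        by_cases h : c₀ i = 0
        · simp [h, leeW, ZMod.val_zero]
        · simp only [h, ne_eq, not_false_eq_true, if_true]
          exact key_coord p s hp hp2 hs m hm (c₀ i) h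
      calc ∑ i, 4 * ∑ u : (ZMod m)ˣ, leeW m ((u : ZMod m) * c₀ i)
          ≤ ∑ i, if c₀ i ≠ 0 then m.totient * B else 0 :=
            Finset.sum_le_sum (fun i _ => hbound i)
        _ = (Finset.univ.filter (fun i => c₀ i ≠ 0)).card * (m.totient * B) := by
            rw [Finset.sum_ite, Finset.sum_const, Finset.sum_const]; simp
        _ = m.totient * (B * dHam m n C) := by rw [← hdH]; unfold hammingNorm; ring
        _ = ∑ _u : (ZMod m)ˣ, B * dHam m n C := by
            rw [Finset.sum_const, Finset.card_univ, ZMod.card_units_eq_totient m, smul_eq_mul]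
    have hnonempty : (Finset.univ : Finset (ZMod m)ˣ).Nonempty := ⟨1, Finset.mem_univ _⟩
    obtain ⟨u₀, _, hu₀⟩ := Finset.exists_le_of_sum_le hnonempty hmain
    have hmem : (u₀ : ZMod m) • c₀ ∈ C := C.smul_mem _ hc₀C
    have hne0 : (u₀ : ZMod m) • c₀ ≠ 0 := by
      intro h
      apply hc₀ne
      have : ((u₀⁻¹ : (ZMod m)ˣ) : ZMod m) • ((u₀ : ZMod m) • c₀) = c₀ := by
        rw [smul_smul, ← Units.val_mul, inv_mul_cancel, Units.val_one, one_smul]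
      rw [h, smul_zero] at this
      exact this.symm
    have hdL : 4 * dLee m n C ≤ B * dHam m n C := by
      calc 4 * dLee m n C ≤ 4 * leeWV m n ((u₀ : ZMod m) • c₀) :=
            Nat.mul_le_mul_left 4 (Nat.sInf_le ⟨_, hmem, hne0, rfl⟩)
        _ ≤ B * dHam m n C := hu₀
    rw [Aps1, if_neg hp2]
    have hq := (Nat.cast_le (α := ℚ)).mpr hdL
    push_cast at hq
    rw [div_mul_eq_mul_div, le_div_iff₀ (by norm_num : (0:ℚ) < 4)]
    calc (dLee m n C : ℚ) * 4 = 4 * (dLee m n C : ℚ) := by ring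
      _ ≤ (p:ℚ)^(s-1) * ((p:ℚ)+1) * (dHam m n C : ℚ) := by
          rw [hBdef] at hq; push_cast at hq; linarith
      _ = (p:ℚ)^(s-1) * ((p:ℚ)+1) * (dHam m n C : ℚ) := rfl
end

section
/- Let C be a submodule of (Z/p^sZ)^n of rank K (i.e., minimal number of generators), with C nonzero. Then d_H(C) ≤ n - K + 1. -/
/-- `C` has rank `K`: it is generated by `K` elements and by no fewer. -/
def hasRank (m n K : ℕ) (C : Submodule (ZMod m) (Fin n → ZMod m)) : Prop :=
  (∃ S : Finset (Fin n → ZMod m), S.card = K ∧ Submodule.span (ZMod m) ↑S = C) ∧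
  ∀ T : Finset (Fin n → ZMod m), Submodule.span (ZMod m) ↑T = C → K ≤ T.card

lemma genA (m : ℕ) [NeZero m] (ι : Type) [Fintype ι] (D : Submodule (ZMod m) (ι → ZMod m)) :
    ∃ T : Finset (ι → ZMod m), T.card ≤ Fintype.card ι ∧ Submodule.span (ZMod m) ↑T = D := by
  classical
  let f : (ι → ℤ) →ₗ[ℤ] (ι → ZMod m) :=
    { toFun := fun v i => (v i : ZMod m)
      map_add' := by intros; ext i; simp
      map_smul' := by intros; ext i; simp }
  have hfsurj : Function.Surjective f := by
    intro y
    refine ⟨fun i => ((y i).val : ℤ), ?_⟩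
    ext i
    simp [f, ZMod.natCast_val, ZMod.cast_id]
  let D' : Submodule ℤ (ι → ℤ) := (D.restrictScalars ℤ).comap f
  obtain ⟨k, b⟩ := Submodule.basisOfPid (Pi.basisFun ℤ ι) D'
  have hk : k ≤ Fintype.card ι := by
    have h1 : Module.finrank ℤ D' = k := by
      simpa using Module.finrank_eq_card_basis b
    have h2 : Module.finrank ℤ D' ≤ Module.finrank ℤ (ι → ℤ) := Submodule.finrank_le D'
    rw [Module.finrank_fintype_fun_eq_card] at h2
    omega
  set g : Fin k → (ι → ZMod m) := fun i => f ((b i : ι → ℤ)) with hg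
  have hmem : ∀ i, g i ∈ D := fun i => (b i).2
  have hspanZ : Submodule.span ℤ (Set.range fun i => ((b i : ι → ℤ))) = D' := by
    have h := congrArg (Submodule.map D'.subtype) b.span_eq
    rwa [Submodule.map_span, Submodule.map_top, Submodule.range_subtype,
      ← Set.range_comp] at h
  have hmapD : Submodule.map f D' = D.restrictScalars ℤ := by
    rw [Submodule.map_comap_eq, LinearMap.range_eq_top.mpr hfsurj, top_inf_eq]
  have hspang : Submodule.span ℤ (Set.range g) = D.restrictScalars ℤ := by
    calc Submodule.span ℤ (Set.range g)
        = Submodule.map f (Submodule.span ℤ (Set.range fun i => ((b i : ι → ℤ)))) := by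
          rw [Submodule.map_span, ← Set.range_comp]; rfl
      _ = D.restrictScalars ℤ := by rw [hspanZ, hmapD]
  refine ⟨Finset.image g Finset.univ, ?_, ?_⟩
  · exact (Finset.card_image_le).trans (by simp [hk])
  · have hcoe : ((Finset.image g Finset.univ : Finset (ι → ZMod m)) : Set (ι → ZMod m))
        = Set.range g := by simp
    rw [hcoe]
    refine le_antisymm (Submodule.span_le.mpr ?_) ?_
    · rintro x ⟨i, rfl⟩; exact hmem i
    · intro x hx
      have hx' : x ∈ Submodule.span ℤ (Set.range g) := by rw [hspang]; exact hx
      exact Submodule.span_le_restrictScalars ℤ (ZMod m) (Set.range g) hx'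

/-- Singleton bound for the rank: `d_H(C) ≤ n - K + 1`. -/
theorem singleton_bound_rank (p s n K : ℕ) (hp : p.Prime) (hs : 0 < s)
    (m : ℕ) (hm : m = p ^ s) [NeZero m]
    (C : Submodule (ZMod m) (Fin n → ZMod m)) (hC : C ≠ ⊥)
    (hK : hasRank m n K C) :
    dHam m n C ≤ n - K + 1 := by
  classical
  obtain ⟨c, hcC, hc0⟩ := Submodule.exists_mem_ne_zero_of_ne_bot hC
  have hWne : {w | ∃ c ∈ C, c ≠ 0 ∧ hammingNorm c = w}.Nonempty :=
    ⟨hammingNorm c, c, hcC, hc0, rfl⟩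
  set d := dHam m n C with hddef
  have hdmem : d ∈ {w | ∃ c ∈ C, c ≠ 0 ∧ hammingNorm c = w} := Nat.sInf_mem hWne
  obtain ⟨c0, hc0C, hc0ne, hc0w⟩ := hdmem
  have hd1 : 1 ≤ d := by
    rw [← hc0w]
    exact Nat.pos_of_ne_zero (fun h => hc0ne (hammingNorm_eq_zero.mp h))
  have hdn : d ≤ n := by
    rw [← hc0w]
    simpa using (hammingNorm_le_card_fintype : hammingNorm c0 ≤ Fintype.card (Fin n))
  have hmin : ∀ x ∈ C, x ≠ 0 → d ≤ hammingNorm x := fun x hx hx0 =>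
    Nat.sInf_le ⟨x, hx, hx0, rfl⟩
  obtain ⟨S, -, hScard⟩ := Finset.exists_subset_card_eq (s := (Finset.univ : Finset (Fin n))) (n := d - 1)
    (by simpa using Nat.sub_le_of_le_add (by omega : d ≤ n + 1))
  set ι := {j : Fin n // j ∉ S}
  let π : (Fin n → ZMod m) →ₗ[ZMod m] (ι → ZMod m) :=
    LinearMap.funLeft (ZMod m) (ZMod m) Subtype.val
  have hker : ∀ x ∈ C, π x = 0 → x = 0 := by
    intro x hx hpx
    by_contra hx0
    have h1 : d ≤ hammingNorm x := hmin x hx hx0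
    have h2 : hammingNorm x ≤ S.card := by
      unfold hammingNorm
      apply Finset.card_le_card
      intro j hj
      rw [Finset.mem_filter] at hj
      by_contra hjS
      exact hj.2 (by simpa [π, LinearMap.funLeft] using congrFun hpx ⟨j, hjS⟩)
    omega
  obtain ⟨T', hT'card, hT'span⟩ := genA m ι (Submodule.map π C)
  have hcardι : Fintype.card ι = n - (d - 1) := by
    simp [ι, Fintype.card_subtype_compl, hScard]
  have hlift : ∀ t : (ι → ZMod m), ∃ y, t ∈ T' → y ∈ C ∧ π y = t := by
    intro t
    by_cases ht : t ∈ T'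
    · have : t ∈ Submodule.map π C := by
        rw [← hT'span]; exact Submodule.subset_span ht
      obtain ⟨y, hy, hyt⟩ := this
      exact ⟨y, fun _ => ⟨hy, hyt⟩⟩
    · exact ⟨0, fun h => absurd h ht⟩
  choose g hg using hlift
  set T := T'.image g with hT
  have hTsub : Submodule.span (ZMod m) (↑T : Set (Fin n → ZMod m)) ≤ C := by
    rw [Submodule.span_le]
    intro x hx
    rw [hT, Finset.coe_image] at hx
    obtain ⟨t, ht, rfl⟩ := hx
    exact (hg t ht).1
  have himg : π '' (↑T : Set (Fin n → ZMod m)) = (↑T' : Set (ι → ZMod m)) := by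
    rw [hT, Finset.coe_image, Set.image_image]
    ext t
    constructor
    · rintro ⟨u, hu, rfl⟩
      simpa [(hg u hu).2] using hu
    · intro ht
      exact ⟨t, ht, (hg t ht).2⟩
  have hmapT : Submodule.map π (Submodule.span (ZMod m) (↑T : Set (Fin n → ZMod m)))
      = Submodule.map π C := by
    rw [Submodule.map_span, himg, hT'span]
  have hspanT : Submodule.span (ZMod m) (↑T : Set (Fin n → ZMod m)) = C := by
    refine le_antisymm hTsub ?_
    intro x hx
    have hπx : π x ∈ Submodule.map π (Submodule.span (ZMod m) (↑T : Set (Fin n → ZMod m))) := by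
      rw [hmapT]; exact ⟨x, hx, rfl⟩
    obtain ⟨y, hy, hyx⟩ := hπx
    have hxy : x - y ∈ C := C.sub_mem hx (hTsub hy)
    have : x - y = 0 := hker _ hxy (by rw [map_sub, hyx, sub_self])
    rw [sub_eq_zero] at this
    rw [this]; exact hy
  have hKT : K ≤ T.card := hK.2 T hspanT
  have hTcard : T.card ≤ n - (d - 1) := by
    rw [← hcardι]
    exact Finset.card_image_le.trans hT'card
  omega
end

section
/- Let C be a nonzero submodule of (Z/p^sZ)^n of rank K. Then ⌊(d_L(C)-1)/M⌋ ≤ n - K, where M = ⌊p^s/2⌋. -/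
lemma span_card_le (m : ℕ) [NeZero m] (ι : Type) [Fintype ι]
    (N : Submodule (ZMod m) (ι → ZMod m)) :
    ∃ T : Finset (ι → ZMod m), T.card ≤ Fintype.card ι ∧
      Submodule.span (ZMod m) (T : Set (ι → ZMod m)) = N := by
  classical
  set φ : (ι → ℤ) →ₗ[ℤ] (ι → ZMod m) :=
    { toFun := fun x i => ((x i : ℤ) : ZMod m)
      map_add' := fun x y => by ext i; simp
      map_smul' := fun z x => by
        ext i
        simp [Pi.smul_apply, zsmul_eq_mul] } with hφ
  have hφs : Function.Surjective φ := by
    intro y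
    obtain ⟨z, hz⟩ : ∃ z : ι → ℤ, ∀ i, ((z i : ℤ) : ZMod m) = y i := by
      refine ⟨fun i => ZMod.intCast_surjective (y i) |>.choose, fun i =>
        (ZMod.intCast_surjective (y i)).choose_spec⟩
    exact ⟨z, funext hz⟩
  set L : Submodule ℤ (ι → ℤ) := (N.restrictScalars ℤ).comap φ with hL
  have hmapL : L.map φ = N.restrictScalars ℤ := Submodule.map_comap_eq_of_surjective hφs _
  obtain ⟨r, b⟩ := Submodule.basisOfPid (Pi.basisFun ℤ ι) L
  have hr : r ≤ Fintype.card ι := by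
    have h1 : Module.rank ℤ L = r := by rw [rank_eq_card_basis b]; simp
    have h2 := Submodule.rank_le L
    rw [h1, rank_fun'] at h2
    exact_mod_cast h2
  set gens : Fin r → (ι → ZMod m) := fun j => φ ((b j : L) : ι → ℤ) with hgens
  have hLspan : Submodule.span ℤ (Set.range (fun j => ((b j : L) : ι → ℤ))) = L := by
    have h := b.span_eq
    have := congrArg (Submodule.map L.subtype) h
    rw [Submodule.map_span, Submodule.map_subtype_top, ← Set.range_comp] at this
    exact this.symm ▸ rfl
  refine ⟨Finset.image gens Finset.univ, ?_, ?_⟩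
  · calc (Finset.image gens Finset.univ).card ≤ Finset.univ.card := Finset.card_image_le
    _ = r := by simp
    _ ≤ _ := hr
  · rw [Finset.coe_image, Finset.coe_univ, Set.image_univ]
    apply le_antisymm
    · rw [Submodule.span_le]
      rintro x ⟨j, rfl⟩
      have : ((b j : L) : ι → ℤ) ∈ L := (b j).2
      have := hmapL ▸ Submodule.mem_map_of_mem this
      simpa using this
    · intro x hx
      obtain ⟨y, hyL, hyx⟩ : ∃ y ∈ L, φ y = x := by
        have : x ∈ N.restrictScalars ℤ := hx
        rw [← hmapL] at this
        simpa using this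
      have hy : y ∈ Submodule.span ℤ (Set.range (fun j => ((b j : L) : ι → ℤ))) := by
        rw [hLspan]; exact hyL
      have : φ y ∈ Submodule.map φ (Submodule.span ℤ (Set.range (fun j => ((b j : L) : ι → ℤ)))) :=
        Submodule.mem_map_of_mem hy
      rw [Submodule.map_span, ← Set.range_comp] at this
      have hsub : Submodule.span ℤ (Set.range (φ ∘ fun j => ((b j : L) : ι → ℤ))) ≤
          (Submodule.span (ZMod m) (Set.range gens)).restrictScalars ℤ := by
        rw [Submodule.span_le]
        rintro _ ⟨j, rfl⟩
        exact Submodule.subset_span ⟨j, rfl⟩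
      exact hyx ▸ hsub this


lemma pullback_span {R V W : Type*} [CommRing R] [AddCommGroup V] [Module R V]
    [AddCommGroup W] [Module R W] (π : V →ₗ[R] W) (C : Submodule R V)
    (hinj : ∀ c ∈ C, π c = 0 → c = 0) (T' : Finset W)
    (hT' : Submodule.span R (T' : Set W) = C.map π) :
    ∃ T : Finset V, T.card ≤ T'.card ∧ Submodule.span R (T : Set V) = C := by
  classical
  have hpre : ∀ v ∈ T', ∃ c, c ∈ C ∧ π c = v := by
    intro v hv
    have : v ∈ C.map π := hT' ▸ Submodule.subset_span hv
    simpa using this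
  choose! g hg1 hg2 using hpre
  refine ⟨T'.image g, Finset.card_image_le, ?_⟩
  have hsub : Submodule.span R ((T'.image g : Finset V) : Set V) ≤ C := by
    rw [Submodule.span_le]
    intro x hx
    simp only [Finset.coe_image, Set.mem_image, Finset.mem_coe] at hx
    obtain ⟨v, hv, rfl⟩ := hx
    exact hg1 v hv
  refine le_antisymm hsub (fun c hc => ?_)
  have himg : π '' ((T'.image g : Finset V) : Set V) = (T' : Set W) := by
    ext w
    simp only [Finset.coe_image, Set.mem_image, Finset.mem_coe]
    constructor
    · rintro ⟨_, ⟨v, hv, rfl⟩, rfl⟩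
      rw [hg2 v hv]; exact hv
    · intro hw
      exact ⟨g w, ⟨w, hw, rfl⟩, hg2 w hw⟩
  have hmap : Submodule.map π (Submodule.span R ((T'.image g : Finset V) : Set V)) = C.map π := by
    rw [Submodule.map_span, himg, hT']
  have : π c ∈ Submodule.map π (Submodule.span R ((T'.image g : Finset V) : Set V)) := by
    rw [hmap]; exact Submodule.mem_map_of_mem hc
  obtain ⟨x, hxspan, hxc⟩ := this
  have hxC : x ∈ C := hsub hxspan
  have : c - x = 0 := hinj _ (C.sub_mem hc hxC) (by rw [map_sub, hxc, sub_self])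
  have : c = x := by rwa [sub_eq_zero] at this
  rw [this]; exact hxspan

lemma leeW_le_half (m : ℕ) [NeZero m] (a : ZMod m) : leeW m a ≤ m / 2 := by
  have := ZMod.val_lt a
  unfold leeW
  omega

lemma leeW_zero (m : ℕ) [NeZero m] : leeW m 0 = 0 := by
  simp [leeW, ZMod.val_zero]

/-- `⌊(d_L(C)-1)/M⌋ ≤ n - K` with `M = ⌊p^s/2⌋`. -/
theorem lee_singleton_floor_bound (p s n K : ℕ) (hp : p.Prime) (hs : 0 < s)
    (m : ℕ) (hm : m = p ^ s) [NeZero m]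
    (C : Submodule (ZMod m) (Fin n → ZMod m)) (hC : C ≠ ⊥)
    (hK : hasRank m n K C) :
    (dLee m n C - 1) / (m / 2) ≤ n - K := by

  classical
  have hm2 : 2 ≤ m := by
    rw [hm]
    calc 2 ≤ p := hp.two_le
    _ = p ^ 1 := (pow_one p).symm
    _ ≤ p ^ s := Nat.pow_le_pow_right hp.pos hs
  have hM : 0 < m / 2 := by omega
  -- minimal Hamming weight codeword
  set hamW : (Fin n → ZMod m) → ℕ :=
    fun c => (Finset.univ.filter (fun i => c i ≠ 0)).card with hhamW
  obtain ⟨c₁, hc₁C, hc₁⟩ := (Submodule.ne_bot_iff C).mp hC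
  set Wset : Set ℕ := {w | ∃ c ∈ C, c ≠ 0 ∧ hamW c = w} with hWset
  have hWne : Wset.Nonempty := ⟨hamW c₁, c₁, hc₁C, hc₁, rfl⟩
  obtain ⟨c₀, hc₀C, hc₀ne, hc₀w⟩ := Nat.sInf_mem hWne
  set w : ℕ := hamW c₀ with hwdef
  have hwmin : ∀ c ∈ C, c ≠ 0 → w ≤ hamW c := by
    intro c h1 h2
    exact hc₀w.trans_le (Nat.sInf_le ⟨c, h1, h2, rfl⟩)
  have hw1 : 1 ≤ w := by
    by_contra h
    have hw0 : w = 0 := by omega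
    apply hc₀ne
    ext i
    by_contra hi
    have : i ∈ Finset.univ.filter (fun i => c₀ i ≠ 0) := by simpa using hi
    rw [hwdef] at hw0
    simp only [hhamW] at hw0
    rw [Finset.card_eq_zero] at hw0
    simp [hw0] at this
  -- choose S ⊆ support of c₀ of card w - 1
  set supp : Finset (Fin n) := Finset.univ.filter (fun i => c₀ i ≠ 0) with hsupp
  obtain ⟨S, hSsub, hScard⟩ := Finset.exists_subset_card_eq
    (show w - 1 ≤ supp.card from by
      have hws : w = supp.card := rfl
      omega)
  -- projection onto complement of S
  set ι := {i : Fin n // i ∈ Sᶜ} with hι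
  set π : (Fin n → ZMod m) →ₗ[ZMod m] (ι → ZMod m) :=
    LinearMap.funLeft (ZMod m) (ZMod m) (fun i : ι => (i : Fin n)) with hπ
  have hcardι : Fintype.card ι = n - (w - 1) := by
    rw [Fintype.card_coe, Finset.card_compl, hScard]
    simp
  have hinj : ∀ c ∈ C, π c = 0 → c = 0 := by
    intro c hcC hc0
    by_contra hne
    have hsub2 : Finset.univ.filter (fun i => c i ≠ 0) ⊆ S := by
      intro i hi
      simp only [Finset.mem_filter] at hi
      by_contra hiS
      have hic : c i = 0 := by
        have := congrFun hc0 ⟨i, Finset.mem_compl.mpr hiS⟩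
        simpa [hπ, LinearMap.funLeft] using this
      exact hi.2 hic
    have : hamW c ≤ w - 1 := by
      rw [hhamW]
      calc (Finset.univ.filter (fun i => c i ≠ 0)).card ≤ S.card := Finset.card_le_card hsub2
      _ = w - 1 := hScard
    have := hwmin c hcC hne
    omega
  obtain ⟨T', hT'card, hT'span⟩ := span_card_le m ι (C.map π)
  obtain ⟨T, hTcard, hTspan⟩ := pullback_span π C hinj T' hT'span
  have hKle : K ≤ n - (w - 1) := by
    calc K ≤ T.card := hK.2 T hTspan
    _ ≤ T'.card := hTcard
    _ ≤ Fintype.card ι := hT'card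
    _ = n - (w - 1) := hcardι
  have hwn : w - 1 ≤ n := by
    calc w - 1 = S.card := hScard.symm
    _ ≤ Fintype.card (Fin n) := Finset.card_le_univ S
    _ = n := Fintype.card_fin n
  -- Lee weight bound
  have hlee : dLee m n C ≤ (m / 2) * w := by
    have h1 : dLee m n C ≤ leeWV m n c₀ := Nat.sInf_le ⟨c₀, hc₀C, hc₀ne, rfl⟩
    have h2 : leeWV m n c₀ ≤ (m / 2) * w := by
      unfold leeWV
      calc ∑ i, leeW m (c₀ i) = ∑ i ∈ supp, leeW m (c₀ i) := by
            rw [hsupp]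
            refine (Finset.sum_filter_of_ne ?_).symm
            intro i _ hne hci
            exact hne (by rw [hci, leeW_zero])
      _ ≤ ∑ _i ∈ supp, (m / 2) := Finset.sum_le_sum fun i _ => leeW_le_half m (c₀ i)
      _ = supp.card * (m / 2) := by rw [Finset.sum_const, smul_eq_mul]
      _ = (m / 2) * w := by rw [hwdef, hhamW, hsupp, Nat.mul_comm]
    exact le_trans h1 h2
  -- final arithmetic
  have hwK : w ≤ n - K + 1 := by omega
  have hmul : (m / 2) * w ≤ (m / 2) * (n - K + 1) := Nat.mul_le_mul_left _ hwK
  have h3 : dLee m n C ≤ ((n - K) + 1) * (m / 2) := by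
    rw [Nat.mul_comm]
    exact hlee.trans hmul
  have h4 : 0 < ((n - K) + 1) * (m / 2) := Nat.mul_pos (Nat.succ_pos _) hM
  have hfin : (dLee m n C - 1) / (m / 2) < (n - K) + 1 := by
    rw [Nat.div_lt_iff_lt_mul hM]
    omega
  omega
end

section
/- Let p be an odd prime and x ∈ F_p^n a nonzero vector such that the cyclic code ⟨x⟩ generated by x is Lee-equidistant (all nonzero multiples λx, λ ∈ F_p \ {0}, have the same Lee weight). Then w_L(x) = (p+1)/4 · w_H(x). -/
lemma gauss_half (m : ℕ) :
    ∑ v ∈ Finset.range (2*m+1), min v (2*m+1 - v) = m * (m+1) := by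
  have h1 : ∑ v ∈ Finset.Ico 0 (m+1), min v (2*m+1 - v) = ∑ v ∈ Finset.range (m+1), v := by
    rw [← Finset.range_eq_Ico]
    exact Finset.sum_congr rfl fun v hv => by
      have := Finset.mem_range.mp hv; omega
  have h2 : ∑ v ∈ Finset.Ico (m+1) (2*m+1), min v (2*m+1 - v)
      = ∑ v ∈ Finset.Ico (m+1) (2*m+1), (2*m+1 - v) := by
    exact Finset.sum_congr rfl fun v hv => by
      have := Finset.mem_Ico.mp hv; omega
  have h3 : ∑ v ∈ Finset.Ico (m+1) (2*m+1), (2*m+1 - v) = ∑ v ∈ Finset.Ico 1 (m+1), v := by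
    have h := Finset.sum_Ico_reflect (fun j => j) (m+1) (n := 2*m+1) (m := 2*m+1) (by omega)
    rw [show 2*m+1+1 - (2*m+1) = 1 by omega, show 2*m+1+1 - (m+1) = m+1 by omega] at h
    exact h
  have h4 : ∑ v ∈ Finset.range (m+1), v = ∑ v ∈ Finset.Ico 1 (m+1), v := by
    rw [Finset.range_eq_Ico, Finset.sum_eq_sum_Ico_succ_bot (by omega)]
    simp
  have h5 : (∑ v ∈ Finset.range (m+1), v) * 2 = (m+1) * m := Finset.sum_range_id_mul_two (m+1)
  have hsplit : ∑ v ∈ Finset.Ico 0 (m+1), min v (2*m+1 - v)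
      + ∑ v ∈ Finset.Ico (m+1) (2*m+1), min v (2*m+1 - v)
      = ∑ v ∈ Finset.range (2*m+1), min v (2*m+1 - v) := by
    rw [Finset.range_eq_Ico]
    exact Finset.sum_Ico_consecutive _ (by omega) (by omega)
  have hc : (m+1) * m = m * (m+1) := Nat.mul_comm _ _
  rw [← hsplit, h1, h2, h3, ← h4]
  omega

lemma sum_leeW (p : ℕ) [NeZero p] :
    ∑ b : ZMod p, leeW p b = ∑ v ∈ Finset.range p, min v (p - v) := by
  apply Finset.sum_nbij' (fun b => (b : ZMod p).val) (fun v => ((v : ℕ) : ZMod p))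
  · intro b _; exact Finset.mem_range.mpr (ZMod.val_lt b)
  · intro v _; exact Finset.mem_univ _
  · intro b _; simp [ZMod.natCast_val, ZMod.cast_id]
  · intro v hv; exact ZMod.val_natCast_of_lt (Finset.mem_range.mp hv)
  · intro b _; rfl

/-- If `p` is an odd prime and the cyclic code `⟨x⟩ ⊆ 𝔽_p^n` is Lee-equidistant,
then `w_L(x) = ((p+1)/4)·w_H(x)`. -/
theorem lee_equidistant_cyclic_weight (p n : ℕ) (hp : p.Prime) (hodd : Odd p)
    (x : Fin n → ZMod p) (hx : x ≠ 0)
    (hequi : ∀ lam : ZMod p, lam ≠ 0 → leeWV p n (lam • x) = leeWV p n x) :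
    4 * leeWV p n x = (p + 1) * hammingNorm x := by
  classical
  haveI : Fact p.Prime := ⟨hp⟩
  obtain ⟨m, hm⟩ := hodd
  have hm1 : 1 ≤ m := by have := hp.two_le; omega
  set S : ℕ := ∑ b : ZMod p, leeW p b with hSdef
  have hS : S = m * (m + 1) := by
    rw [hSdef, sum_leeW, hm, gauss_half]
  have h0 : leeW p (0 : ZMod p) = 0 := by simp [leeW]
  have key : ∀ a : ZMod p, a ≠ 0 → ∑ lam : ZMod p, leeW p (lam * a) = S := by
    intro a ha
    exact Fintype.sum_equiv (Equiv.mulRight₀ a ha) _ _ (fun lam => rfl)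
  have hA1 : ∑ lam : ZMod p, leeWV p n (lam • x) = (p - 1) * leeWV p n x := by
    rw [← Finset.sum_subset (Finset.subset_univ ({0}ᶜ : Finset (ZMod p)))]
    · rw [Finset.sum_congr rfl (fun lam hl => hequi lam (by simpa using hl))]
      rw [Finset.sum_const]
      have hcard : ({0}ᶜ : Finset (ZMod p)).card = p - 1 := by
        rw [Finset.card_compl]; simp [ZMod.card]
      rw [hcard, smul_eq_mul]
    · intro lam _ hl
      have : lam = 0 := by simpa using hl
      subst this
      simp [leeWV, h0]
  have hA2 : ∑ lam : ZMod p, leeWV p n (lam • x) = hammingNorm x * S := by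
    simp only [leeWV, Pi.smul_apply, smul_eq_mul]
    rw [Finset.sum_comm]
    have : ∀ i : Fin n, ∑ lam : ZMod p, leeW p (lam * x i)
        = if x i ≠ 0 then S else 0 := by
      intro i
      by_cases h : x i = 0
      · simp [h, h0]
      · simp [h, key _ h]
    rw [Finset.sum_congr rfl fun i _ => this i]
    rw [Finset.sum_ite, Finset.sum_const, Finset.sum_const]
    simp [hammingNorm]
  have hmain : (p - 1) * leeWV p n x = hammingNorm x * (m * (m+1)) := by
    rw [← hS, ← hA2, hA1]
  set L := leeWV p n x
  set w := hammingNorm x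
  have h2 : 2 * m * L = m * (w * (m+1)) := by
    calc 2 * m * L = (p-1) * L := by rw [show p - 1 = 2*m by omega]
    _ = w * (m*(m+1)) := hmain
    _ = m * (w * (m+1)) := by ring
  have h3 : 2 * L = w * (m + 1) := by
    apply Nat.eq_of_mul_eq_mul_left (show 0 < m by omega)
    calc m * (2 * L) = 2 * m * L := by ring
    _ = m * (w * (m+1)) := h2
  calc 4 * L = 2 * (2 * L) := by ring
  _ = 2 * (w * (m+1)) := by rw [h3]
  _ = (p + 1) * w := by rw [hm]; ring
end

section
/- For an odd prime p, the vector x = (1, 2, ..., (p-1)/2) in F_p^{(p-1)/2} generates a Lee-equidistant code: every nonzero scalar multiple λx (λ ∈ F_p, λ ≠ 0) has Lee weight (p^2-1)/8. -/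
lemma leeW_neg (p : ℕ) [NeZero p] (a : ZMod p) : leeW p (-a) = leeW p a := by
  unfold leeW
  rcases eq_or_ne a 0 with rfl | h
  · simp
  · have hv := ZMod.val_lt a
    rw [ZMod.neg_val, if_neg h, Nat.sub_sub_self hv.le, Nat.min_comm]

lemma sum_zmod (p : ℕ) [NeZero p] (f : ZMod p → ℕ) :
    ∑ a : ZMod p, f a = ∑ k ∈ Finset.range p, f (k : ZMod p) := by
  refine Finset.sum_nbij' (fun a => a.val) (fun k => (k : ZMod p)) ?_ ?_ ?_ ?_ ?_
  · intro a _; exact Finset.mem_range.mpr (ZMod.val_lt a)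
  · intro k _; exact Finset.mem_univ _
  · intro a _; exact ZMod.natCast_rightInverse a
  · intro k hk; exact ZMod.val_cast_of_lt (Finset.mem_range.mp hk)
  · intro a _; rw [ZMod.natCast_rightInverse a]

lemma sum_symm (F : ℕ → ℕ) (m : ℕ) (h0 : F 0 = 0)
    (hs : ∀ k ≤ 2 * m, F (2 * m + 1 - k) = F k) :
    ∑ k ∈ Finset.range (2 * m + 1), F k = 2 * ∑ k ∈ Finset.range m, F (k + 1) := by
  rw [show 2 * m + 1 = (m + 1) + m by ring, Finset.sum_range_add]
  have h1 : ∑ k ∈ Finset.range (m + 1), F k = ∑ k ∈ Finset.range m, F (k + 1) := by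
    rw [Finset.sum_range_succ' F m, h0, add_zero]
  have h2 : ∑ j ∈ Finset.range m, F (m + 1 + j) = ∑ j ∈ Finset.range m, F (j + 1) := by
    rw [← Finset.sum_range_reflect (fun j => F (j + 1)) m]
    refine Finset.sum_congr rfl fun j hj => ?_
    have hj' := Finset.mem_range.mp hj
    have : m - 1 - j + 1 = m - j := by omega
    rw [this, ← hs (m + 1 + j) (by omega)]
    congr 1; omega
  rw [h1, h2]; ring

lemma range_min_sum (m : ℕ) :
    ∑ k ∈ Finset.range (2 * m + 1), min k (2 * m + 1 - k) = m * (m + 1) := by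
  rw [show 2 * m + 1 = (m + 1) + m by ring, Finset.sum_range_add]
  have h1 : ∑ k ∈ Finset.range (m + 1), min k ((m + 1) + m - k)
      = ∑ k ∈ Finset.range (m + 1), k := by
    refine Finset.sum_congr rfl fun k hk => ?_
    have := Finset.mem_range.mp hk; omega
  have h2 : ∑ j ∈ Finset.range m, min ((m + 1) + j) ((m + 1) + m - ((m + 1) + j))
      = ∑ j ∈ Finset.range m, (m - j) := by
    refine Finset.sum_congr rfl fun j hj => ?_
    have := Finset.mem_range.mp hj; omega
  have h3 : ∑ j ∈ Finset.range m, (m - j) = ∑ j ∈ Finset.range m, (j + 1) := by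
    rw [← Finset.sum_range_reflect (fun j => j + 1) m]
    refine Finset.sum_congr rfl fun j hj => ?_
    have := Finset.mem_range.mp hj; omega
  have h4 : ∑ k ∈ Finset.range (m + 1), k = ∑ j ∈ Finset.range m, (j + 1) := by
    rw [Finset.sum_range_succ' (fun k => k) m]; simp
  have h5 := Finset.sum_range_id_mul_two (m + 1)
  have h6 : (m + 1) * (m + 1 - 1) = m * (m + 1) := by
    simp [Nat.mul_comm]
  rw [h6] at h5
  rw [h1, h2, h3, ← h4]
  omega

/-- For an odd prime `p`, the vector `(1,2,…,(p-1)/2) ∈ 𝔽_p^{(p-1)/2}` generates a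
Lee-equidistant code: every nonzero scalar multiple has Lee weight `(p²-1)/8`. -/
theorem equidistant_construction_Fp (p : ℕ) (hp : p.Prime) (hodd : Odd p)
    (x : Fin ((p - 1) / 2) → ZMod p) (hx : ∀ i, x i = ((i : ℕ) + 1 : ZMod p)) :
    ∀ lam : ZMod p, lam ≠ 0 →
      8 * leeWV p ((p - 1) / 2) (lam • x) = p ^ 2 - 1 := by
  intro lam hlam
  obtain ⟨n, hn⟩ := hodd
  have hp2 : 2 ≤ p := hp.two_le
  haveI : NeZero p := ⟨by omega⟩
  haveI : Fact p.Prime := ⟨hp⟩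
  have hn2 : (p - 1) / 2 = n := by omega
  set F : ℕ → ℕ := fun k => leeW p (lam * (k : ZMod p)) with hF
  have step1 : leeWV p ((p - 1) / 2) (lam • x) = ∑ k ∈ Finset.range ((p - 1) / 2), F (k + 1) := by
    rw [leeWV, ← Fin.sum_univ_eq_sum_range (fun k => F (k + 1)) ((p - 1) / 2)]
    refine Finset.sum_congr rfl fun i _ => ?_
    rw [Pi.smul_apply, smul_eq_mul, hx i, hF]
    push_cast
    ring_nf
  have step2 : ∑ k ∈ Finset.range p, F k = 2 * ∑ k ∈ Finset.range ((p - 1) / 2), F (k + 1) := by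
    rw [hn2, show p = 2 * n + 1 from hn]
    refine sum_symm F n ?_ ?_
    · simp [hF, leeW]
    · intro k hk
      have hcast : ((2 * n + 1 - k : ℕ) : ZMod p) = -(k : ZMod p) := by
        rw [Nat.cast_sub (by omega), ← hn, ZMod.natCast_self]
        ring
      simp only [hF, hcast, mul_neg, leeW_neg]
  have step3 : ∑ k ∈ Finset.range p, F k = ∑ a : ZMod p, leeW p a := by
    rw [← sum_zmod p (fun a => leeW p (lam * a))]
    exact Equiv.sum_comp (Equiv.mulLeft₀ lam hlam) (leeW p)
  have step4 : ∑ a : ZMod p, leeW p a = n * (n + 1) := by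
    rw [sum_zmod p (leeW p), show p = 2 * n + 1 from hn, ← range_min_sum n]
    refine Finset.sum_congr rfl fun k hk => ?_
    rw [leeW, ZMod.val_cast_of_lt (Finset.mem_range.mp hk)]
  have hsq : p ^ 2 = 4 * (n * (n + 1)) + 1 := by subst hn; ring
  rw [step1]
  omega
end

section
/- The vector x = (1, 2, ..., 2^s - 1) in (Z/2^sZ)^{2^s - 1} generates a Lee-equidistant cyclic module: every nonzero element of the Z/2^sZ-module generated by x has Lee weight 2^{2s-2}. -/
open Finset

private lemma lee_key (f : ℕ → ℕ) (b : ℕ) (hf : ∀ k, f (k + b) = f k) :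
    ∀ n i, f (n * b + i) = f i := by
  intro n i
  induction n with
  | zero => simp
  | succ m ihm =>
    have : (m + 1) * b + i = (m * b + i) + b := by ring
    rw [this, hf, ihm]

private lemma lee_sum_range_mul_of_periodic (f : ℕ → ℕ) (b : ℕ)
    (hf : ∀ k, f (k + b) = f k) (a : ℕ) :
    ∑ k ∈ Finset.range (a * b), f k = a * ∑ k ∈ Finset.range b, f k := by
  induction a with
  | zero => simp
  | succ n ih =>
    have h : (n + 1) * b = n * b + b := by ring
    rw [h, Finset.sum_range_add, ih]
    rw [Finset.sum_congr rfl fun i _ => lee_key f b hf n i]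
    ring

private lemma lee_sum_zmod (n : ℕ) [NeZero n] (f : ZMod n → ℕ) :
    ∑ k ∈ Finset.range n, f (k : ZMod n) = ∑ a : ZMod n, f a := by
  rw [Finset.sum_range fun k => f k]
  apply Fintype.sum_bijective (fun i : Fin n => ((i : ℕ) : ZMod n))
  · refine (Fintype.bijective_iff_injective_and_card _).2 ⟨fun a b hab => ?_, by simp⟩
    have := congrArg ZMod.val hab
    rwa [ZMod.val_cast_of_lt a.2, ZMod.val_cast_of_lt b.2, Fin.val_inj] at this
  · intro i; rfl

private lemma lee_sum_min (m : ℕ) :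
    ∑ r ∈ Finset.range (2 * m), min r (2 * m - r) = m ^ 2 := by
  have h2m : 2 * m = m + m := by omega
  rw [h2m, Finset.sum_range_add]
  have e1 : ∀ r ∈ range m, min r (m + m - r) = r := by intro r hr; simp at hr; omega
  have e2 : ∀ i ∈ range m, min (m + i) (m + m - (m + i)) = m - i := by
    intro i hi; simp at hi; omega
  rw [Finset.sum_congr rfl e1, Finset.sum_congr rfl e2]
  have e3 : ∑ i ∈ range m, (m - i) = ∑ i ∈ range m, (i + 1) := by
    rw [← Finset.sum_range_reflect]
    refine Finset.sum_congr rfl fun i hi => ?_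
    simp at hi; omega
  rw [e3, Finset.sum_add_distrib, Finset.sum_const, card_range, smul_eq_mul, mul_one]
  have g := Finset.sum_range_id_mul_two m
  cases m with
  | zero => simp
  | succ k => simp at g ⊢; nlinarith [g]

private lemma lee_core (j u : ℕ) :
    ∑ a : ZMod (2 ^ (j + u + 1)), leeW (2 ^ (j + u + 1)) (((2 ^ j : ℕ) : ZMod (2 ^ (j + u + 1))) * a)
      = 2 ^ (2 * j + 2 * u) := by
  set s := j + u + 1 with hs
  haveI : NeZero (2 ^ s) := ⟨by positivity⟩
  rw [← lee_sum_zmod (2 ^ s)]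
  have hval : ∀ k : ℕ, leeW (2 ^ s) (((2 ^ j : ℕ) : ZMod (2 ^ s)) * (k : ZMod (2 ^ s)))
      = min ((2 ^ j * k) % 2 ^ s) (2 ^ s - (2 ^ j * k) % 2 ^ s) := by
    intro k
    rw [← Nat.cast_mul, leeW, ZMod.val_natCast]
  rw [Finset.sum_congr rfl fun k _ => hval k]
  have hsplit : 2 ^ s = 2 ^ j * 2 ^ (u + 1) := by
    rw [hs, show j + u + 1 = j + (u + 1) by ring, pow_add]
  have hper : ∀ k, (2 ^ j * (k + 2 ^ (u + 1))) % 2 ^ s = (2 ^ j * k) % 2 ^ s := by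
    intro k
    have : 2 ^ j * (k + 2 ^ (u + 1)) = 2 ^ j * k + 2 ^ s := by rw [hsplit]; ring
    rw [this, Nat.add_mod_right]
  have hper' : ∀ k, (fun k => min ((2 ^ j * k) % 2 ^ s) (2 ^ s - (2 ^ j * k) % 2 ^ s)) (k + 2 ^ (u + 1))
      = (fun k => min ((2 ^ j * k) % 2 ^ s) (2 ^ s - (2 ^ j * k) % 2 ^ s)) k := by
    intro k; simp only [hper]
  rw [show Finset.range (2 ^ s) = Finset.range (2 ^ j * 2 ^ (u + 1)) by rw [← hsplit]]
  rw [lee_sum_range_mul_of_periodic _ _ hper']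
  have hterm : ∀ k ∈ Finset.range (2 ^ (u + 1)),
      min ((2 ^ j * k) % 2 ^ s) (2 ^ s - (2 ^ j * k) % 2 ^ s)
        = 2 ^ j * min k (2 ^ (u + 1) - k) := by
    intro k hk
    simp only [Finset.mem_range] at hk
    have hlt : 2 ^ j * k < 2 ^ s := by
      rw [hsplit]
      exact (mul_lt_mul_iff_right₀ (show 0 < 2 ^ j by positivity)).mpr hk
    rw [Nat.mod_eq_of_lt hlt, hsplit, ← Nat.mul_sub, min_mul_mul_left]
  rw [Finset.sum_congr rfl hterm, ← Finset.mul_sum]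
  have : ∑ k ∈ Finset.range (2 ^ (u + 1)), min k (2 ^ (u + 1) - k) = (2 ^ u) ^ 2 := by
    have h2 : 2 ^ (u + 1) = 2 * 2 ^ u := by ring
    rw [h2]
    exact lee_sum_min (2 ^ u)
  rw [this]
  ring

/-- The vector `(1,2,…,2^s-1) ∈ (ℤ/2^sℤ)^{2^s-1}` generates a Lee-equidistant
cyclic module: every nonzero multiple has Lee weight `2^{2s-2}`. -/
theorem equidistant_construction_Z2s (s : ℕ) (hs : 0 < s)
    (x : Fin (2 ^ s - 1) → ZMod (2 ^ s)) (hx : ∀ i, x i = ((i : ℕ) + 1 : ZMod (2 ^ s))) :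
    ∀ lam : ZMod (2 ^ s), lam • x ≠ 0 →
      leeWV (2 ^ s) (2 ^ s - 1) (lam • x) = 2 ^ (2 * s - 2) := by
  intro lam hlam
  haveI : NeZero (2 ^ s) := ⟨by positivity⟩
  have hlam0 : lam ≠ 0 := by
    rintro rfl; exact hlam (zero_smul _ _)
  -- rewrite the sum as a sum over all of ZMod (2^s)
  have step1 : leeWV (2 ^ s) (2 ^ s - 1) (lam • x) = ∑ a : ZMod (2 ^ s), leeW (2 ^ s) (lam * a) := by
    unfold leeWV
    have : ∀ i : Fin (2 ^ s - 1), leeW (2 ^ s) ((lam • x) i)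
        = leeW (2 ^ s) (lam * (((i : ℕ) + 1 : ℕ) : ZMod (2 ^ s))) := by
      intro i
      rw [Pi.smul_apply, hx i, smul_eq_mul]
      push_cast
      ring_nf
    rw [Finset.sum_congr rfl fun i _ => this i,
      Fin.sum_univ_eq_sum_range (fun k => leeW (2 ^ s) (lam * ((k + 1 : ℕ) : ZMod (2 ^ s))))]
    rw [← lee_sum_zmod (2 ^ s) fun a => leeW (2 ^ s) (lam * a)]
    have hpow : 2 ^ s = (2 ^ s - 1) + 1 := by
      have : 0 < 2 ^ s := by positivity
      omega
    rw [show Finset.range (2 ^ s) = Finset.range ((2 ^ s - 1) + 1) from by rw [← hpow],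
      Finset.sum_range_succ']
    have h0 : leeW (2 ^ s) (lam * ((0 : ℕ) : ZMod (2 ^ s))) = 0 := by
      simp [leeW]
    rw [h0, add_zero]
  rw [step1]
  have hfac : ∃ j w, j < s ∧ ¬ 2 ∣ w ∧ lam = ((2 ^ j * w : ℕ) : ZMod (2 ^ s)) := by
    have hv0 : lam.val ≠ 0 := by simpa [ZMod.val_eq_zero] using hlam0
    refine ⟨lam.val.factorization 2, lam.val / 2 ^ (lam.val.factorization 2), ?_, ?_, ?_⟩
    · have h1 : 2 ^ (lam.val.factorization 2) ≤ lam.val := Nat.ordProj_le 2 hv0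
      have h2 : lam.val < 2 ^ s := ZMod.val_lt lam
      exact (pow_lt_pow_iff_right₀ (by norm_num)).mp (lt_of_le_of_lt h1 h2)
    · exact Nat.not_dvd_ordCompl Nat.prime_two hv0
    · rw [Nat.ordProj_mul_ordCompl_eq_self]
      exact (ZMod.natCast_rightInverse lam).symm
  obtain ⟨j, w, hjs, hodd, rfl⟩ := hfac
  clear hlam hx step1 hlam0
  clear x
  obtain ⟨u, rfl⟩ : ∃ u, s = j + u + 1 := ⟨s - j - 1, by omega⟩
  have hwunit : IsUnit ((w : ℕ) : ZMod (2 ^ (j + u + 1))) := by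
    rw [ZMod.isUnit_iff_coprime]
    exact (Nat.Coprime.pow_right _ (((Nat.prime_two.coprime_iff_not_dvd).2 hodd).symm))
  have hlameq : ((2 ^ j * w : ℕ) : ZMod (2 ^ (j + u + 1)))
      = ((2 ^ j : ℕ) : ZMod (2 ^ (j + u + 1))) * ((w : ℕ) : ZMod (2 ^ (j + u + 1))) := by
    push_cast
    ring
  rw [hlameq]
  have hreindex : ∑ a : ZMod (2 ^ (j + u + 1)),
      leeW (2 ^ (j + u + 1)) (((2 ^ j : ℕ) : ZMod (2 ^ (j + u + 1))) * ((w : ℕ) : ZMod (2 ^ (j + u + 1))) * a)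
      = ∑ a : ZMod (2 ^ (j + u + 1)),
        leeW (2 ^ (j + u + 1)) (((2 ^ j : ℕ) : ZMod (2 ^ (j + u + 1))) * a) := by
    refine Fintype.sum_bijective (fun a : ZMod (2 ^ (j + u + 1)) => ((w : ℕ) : ZMod (2 ^ (j + u + 1))) * a)
      (IsUnit.isUnit_iff_mulLeft_bijective.mp hwunit) _ _ fun a => ?_
    rw [mul_assoc]
  rw [hreindex, lee_core j u]
  congr 1
  omega
end

section
/- Let i ∈ {1,...,s}, p an odd prime, and let g ∈ (Z/p^sZ)^n be the vector consisting of p copies of each element of ⟨p^{i-1}⟩ \ ⟨p^i⟩ taken up to sign (one representative of each ± pair), together with p-1 copies of each element of ⟨p^j⟩ \ ⟨p^{j+1}⟩ up to sign for every j ∈ {i,...,s-1}. Then the cyclic module ⟨g⟩ is Lee-equidistant: every nonzero element of ⟨g⟩ has Lee weight p^{2s-i}(p^2-1)/8. -/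
lemma sum_min_range (r : ℕ) :
    4 * ∑ t ∈ Finset.range (2*r+1), min t (2*r+1 - t) = (2*r+1)^2 - 1 := by
  have hsplit : ∑ t ∈ Finset.range (2*r+1), min t (2*r+1 - t)
      = (∑ t ∈ Finset.range (r+1), min t (2*r+1-t))
        + ∑ x ∈ Finset.range r, min (r+1+x) (2*r+1-(r+1+x)) := by
    have : 2*r+1 = (r+1) + r := by omega
    rw [this, Finset.sum_range_add]
  have h1 : ∑ t ∈ Finset.range (r+1), min t (2*r+1-t) = ∑ t ∈ Finset.range (r+1), t := by
    refine Finset.sum_congr rfl fun t ht => ?_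
    have := Finset.mem_range.mp ht; omega
  have h2 : ∑ x ∈ Finset.range r, min (r+1+x) (2*r+1-(r+1+x)) = ∑ x ∈ Finset.range r, (r - x) := by
    refine Finset.sum_congr rfl fun t ht => ?_
    have := Finset.mem_range.mp ht; omega
  have h3 : ∑ x ∈ Finset.range r, (r - x) = ∑ x ∈ Finset.range r, (x+1) := by
    have := Finset.sum_range_reflect (fun j => j + 1) r
    rw [← this]
    refine Finset.sum_congr rfl fun t ht => ?_
    have := Finset.mem_range.mp ht; omega
  have h4 : ∑ x ∈ Finset.range r, (x+1) = (∑ x ∈ Finset.range r, x) + r := by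
    rw [Finset.sum_add_distrib, Finset.sum_const, Finset.card_range, smul_eq_mul, mul_one]
  have g1 := Finset.sum_range_id_mul_two (r+1)
  have g2 := Finset.sum_range_id_mul_two r
  have e1 : (r+1)*r = r*r + r := by ring
  have e2 : (2*r+1)^2 = 4*(r*r) + 4*r + 1 := by ring
  have hr : r * (r-1) + r = r * r := by cases r with
    | zero => simp
    | succ n => have : (n+1) * (n+1-1) = (n+1)*n := rfl
                rw [this]; ring
  have h5 : ∑ x ∈ Finset.range (r+1), x = (∑ x ∈ Finset.range r, x) + r := Finset.sum_range_succ _ r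
  omega

lemma pow_dvd_val_iff (p s k : ℕ) (hk : k ≤ s) [NeZero (p^s)] (a : ZMod (p^s)) :
    (p : ZMod (p^s))^k ∣ a ↔ p^k ∣ a.val := by
  constructor
  · rintro ⟨b, hb⟩
    have hcast : ((p^k : ℕ) : ZMod (p^s)) = (p : ZMod (p^s))^k := by push_cast; ring
    have hval : a.val = (((p^k : ℕ) : ZMod (p^s)) * b).val := by rw [hcast, ← hb]
    rw [hval, ZMod.val_mul, ZMod.val_natCast]
    have hd : p^k ∣ p^s := pow_dvd_pow p hk
    rw [Nat.dvd_mod_iff hd]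
    exact Dvd.dvd.mul_right ((Nat.dvd_mod_iff hd).mpr dvd_rfl) _
  · rintro ⟨c, hc⟩
    refine ⟨(c : ZMod (p^s)), ?_⟩
    have : a = ((a.val : ℕ) : ZMod (p^s)) := (ZMod.natCast_rightInverse a).symm
    rw [this, hc]
    push_cast; ring

lemma sum_over_D (p s k : ℕ) (hp : 0 < p) (hk : k ≤ s) [NeZero (p^s)] (F : ZMod (p^s) → ℕ) :
    ∑ a ∈ Finset.univ.filter (fun a : ZMod (p^s) => p^k ∣ a.val), F a
      = ∑ t ∈ Finset.range (p^(s-k)), F ((p^k * t : ℕ) : ZMod (p^s)) := by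
  have hpk : 0 < p^k := pow_pos hp k
  have hps : p^k * p^(s-k) = p^s := by rw [← pow_add]; congr 1; omega
  refine Finset.sum_nbij' (i := fun a => a.val / p^k)
    (j := fun t => ((p^k * t : ℕ) : ZMod (p^s))) ?_ ?_ ?_ ?_ ?_
  · intro a ha
    rw [Finset.mem_filter] at ha
    rw [Finset.mem_range]
    have := ZMod.val_lt a
    exact Nat.div_lt_of_lt_mul (by omega)
  · intro t ht
    rw [Finset.mem_range] at ht
    rw [Finset.mem_filter]
    refine ⟨Finset.mem_univ _, ?_⟩
    rw [ZMod.val_natCast, Nat.dvd_mod_iff (pow_dvd_pow p hk)]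
    exact Dvd.intro t rfl
  · intro a ha
    rw [Finset.mem_filter] at ha
    show ((p^k * (a.val / p^k) : ℕ) : ZMod (p^s)) = a
    rw [Nat.mul_div_cancel' ha.2]
    exact ZMod.natCast_rightInverse a
  · intro t ht
    rw [Finset.mem_range] at ht
    have hlt : p^k * t < p^s := by
      calc p^k * t < p^k * p^(s-k) := (Nat.mul_lt_mul_left hpk).mpr ht
      _ = p^s := hps
    show ((p^k * t : ℕ) : ZMod (p^s)).val / p^k = t
    rw [ZMod.val_cast_of_lt hlt, Nat.mul_div_cancel_left _ hpk]
  · intro a ha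
    rw [Finset.mem_filter] at ha
    show F a = F ((p^k * (a.val / p^k) : ℕ) : ZMod (p^s))
    rw [Nat.mul_div_cancel' ha.2, (ZMod.natCast_rightInverse a : ((a.val : ℕ) : ZMod (p^s)) = a)]

lemma sum_range_mul' (a b : ℕ) (f : ℕ → ℕ) :
    ∑ t ∈ Finset.range (a*b), f t = ∑ q ∈ Finset.range a, ∑ r ∈ Finset.range b, f (q*b+r) := by
  induction a with
  | zero => simp
  | succ n ih =>
    rw [Finset.sum_range_succ, ← ih, Nat.succ_mul, Finset.sum_range_add]

lemma sum_shift (p s k v : ℕ) (hkv : k + v ≤ s) [NeZero (p^s)] (F : ZMod (p^s) → ℕ) :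
    ∑ t ∈ Finset.range (p^(s-k)), F ((p^(k+v) * t : ℕ) : ZMod (p^s))
      = p^v * ∑ t ∈ Finset.range (p^(s-(k+v))), F ((p^(k+v) * t : ℕ) : ZMod (p^s)) := by
  have h1 : p^(s-k) = p^v * p^(s-(k+v)) := by rw [← pow_add]; congr 1; omega
  rw [h1, sum_range_mul']
  have h2 : ∀ q ∈ Finset.range (p^v), ∀ r ∈ Finset.range (p^(s-(k+v))),
      F ((p^(k+v) * (q * p^(s-(k+v)) + r) : ℕ) : ZMod (p^s))
        = F ((p^(k+v) * r : ℕ) : ZMod (p^s)) := by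
    intro q _ r _
    congr 1
    have hps : (p^(k+v) : ℕ) * p^(s-(k+v)) = p^s := by rw [← pow_add]; congr 1; omega
    have : (p^(k+v) * (q * p^(s-(k+v)) + r) : ℕ) = q * p^s + p^(k+v) * r := by
      rw [← hps]; ring
    rw [this, Nat.cast_add, Nat.cast_mul, ZMod.natCast_self, mul_zero, zero_add]
  calc ∑ q ∈ Finset.range (p^v), ∑ r ∈ Finset.range (p^(s-(k+v))),
        F ((p^(k+v) * (q * p^(s-(k+v)) + r) : ℕ) : ZMod (p^s))
      = ∑ q ∈ Finset.range (p^v), ∑ r ∈ Finset.range (p^(s-(k+v))),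
        F ((p^(k+v) * r : ℕ) : ZMod (p^s)) := by
        refine Finset.sum_congr rfl fun q hq => Finset.sum_congr rfl fun r hr => h2 q hq r hr
    _ = p^v * ∑ t ∈ Finset.range (p^(s-(k+v))), F ((p^(k+v) * t : ℕ) : ZMod (p^s)) := by
        rw [Finset.sum_const, Finset.card_range, smul_eq_mul]

lemma sum_unit (p s j : ℕ) (hk : j ≤ s) [NeZero (p^s)] (u : ZMod (p^s)) (hu : IsUnit u) :
    ∑ a ∈ Finset.univ.filter (fun a : ZMod (p^s) => p^j ∣ a.val), leeW (p^s) (u * a)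
      = ∑ a ∈ Finset.univ.filter (fun a : ZMod (p^s) => p^j ∣ a.val), leeW (p^s) a := by
  obtain ⟨w, rfl⟩ := hu
  refine Finset.sum_nbij' (i := fun a => (w : ZMod (p^s)) * a)
    (j := fun a => ((w⁻¹ : (ZMod (p^s))ˣ) : ZMod (p^s)) * a) ?_ ?_ ?_ ?_ ?_
  · intro a ha
    rw [Finset.mem_filter] at ha ⊢
    refine ⟨Finset.mem_univ _, ?_⟩
    rw [← pow_dvd_val_iff p s j hk] at ha ⊢
    exact Dvd.dvd.mul_left ha.2 _
  · intro a ha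
    rw [Finset.mem_filter] at ha ⊢
    refine ⟨Finset.mem_univ _, ?_⟩
    rw [← pow_dvd_val_iff p s j hk] at ha ⊢
    exact Dvd.dvd.mul_left ha.2 _
  · intro a _
    show ((w⁻¹ : (ZMod (p^s))ˣ) : ZMod (p^s)) * ((w : ZMod (p^s)) * a) = a
    rw [← mul_assoc, Units.inv_mul, one_mul]
  · intro a _
    show (w : ZMod (p^s)) * (((w⁻¹ : (ZMod (p^s))ˣ) : ZMod (p^s)) * a) = a
    rw [← mul_assoc, Units.mul_inv, one_mul]
  · intro a _
    rfl

lemma sum_leeW_D (p s k : ℕ) (hp : 1 < p) (hodd : Odd p) (hk : k ≤ s) [NeZero (p^s)] :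
    4 * ∑ a ∈ Finset.univ.filter (fun a : ZMod (p^s) => p^k ∣ a.val), leeW (p^s) a
      = p^k * (p^(2*(s-k)) - 1) := by
  rw [sum_over_D p s k (by omega) hk]
  have hpk : 0 < p^k := pow_pos (by omega) k
  have hps : p^k * p^(s-k) = p^s := by rw [← pow_add]; congr 1; omega
  have hterm : ∀ t ∈ Finset.range (p^(s-k)),
      leeW (p^s) ((p^k * t : ℕ) : ZMod (p^s)) = p^k * min t (p^(s-k) - t) := by
    intro t ht
    rw [Finset.mem_range] at ht
    have hlt : p^k * t < p^s := by
      calc p^k * t < p^k * p^(s-k) := (Nat.mul_lt_mul_left hpk).mpr ht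
        _ = p^s := hps
    unfold leeW
    rw [ZMod.val_cast_of_lt hlt]
    have hsub : p^s - p^k*t = p^k * (p^(s-k) - t) := by
      rw [Nat.mul_sub, hps]
    rw [hsub]
    rcases le_total t (p^(s-k) - t) with h | h
    · rw [min_eq_left h, min_eq_left (Nat.mul_le_mul_left _ h)]
    · rw [min_eq_right h, min_eq_right (Nat.mul_le_mul_left _ h)]
  rw [Finset.sum_congr rfl hterm, ← Finset.mul_sum]
  obtain ⟨r, hr⟩ : ∃ r, p^(s-k) = 2*r+1 := by
    obtain ⟨r, hr⟩ := (hodd.pow (n := s-k))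
    exact ⟨r, by omega⟩
  have hM2 : (2*r+1)^2 = p^(2*(s-k)) := by
    rw [← hr, ← pow_mul]; congr 1; omega
  rw [hr, ← hM2]
  calc 4 * (p^k * ∑ t ∈ Finset.range (2*r+1), min t (2*r+1 - t))
      = p^k * (4 * ∑ t ∈ Finset.range (2*r+1), min t (2*r+1 - t)) := by ring
    _ = p^k * ((2*r+1)^2 - 1) := by rw [sum_min_range r]

lemma T_val (p s k v : ℕ) (hp : p.Prime) (hodd : Odd p) (hkv : k + v ≤ s) [NeZero (p^s)]
    (u : ZMod (p^s)) (hu : IsUnit u) :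
    4 * ∑ a ∈ Finset.univ.filter (fun a : ZMod (p^s) => p^k ∣ a.val),
        leeW (p^s) ((p : ZMod (p^s))^v * u * a)
      = p^v * (p^(k+v) * (p^(2*(s-(k+v))) - 1)) := by
  have hp1 : 1 < p := hp.one_lt
  have hmain : ∑ a ∈ Finset.univ.filter (fun a : ZMod (p^s) => p^k ∣ a.val),
      leeW (p^s) ((p : ZMod (p^s))^v * u * a)
      = p^v * ∑ a ∈ Finset.univ.filter (fun a : ZMod (p^s) => p^(k+v) ∣ a.val),
          leeW (p^s) a := by
    rw [sum_over_D p s k (by omega) (by omega) (fun a => leeW (p^s) ((p : ZMod (p^s))^v * u * a))]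
    have hcast : ∀ t : ℕ, (p : ZMod (p^s))^v * u * ((p^k * t : ℕ) : ZMod (p^s))
        = u * ((p^(k+v) * t : ℕ) : ZMod (p^s)) := by
      intro t; push_cast [pow_add]; ring
    calc ∑ t ∈ Finset.range (p^(s-k)), leeW (p^s) ((p:ZMod (p^s))^v * u * ((p^k*t : ℕ) : ZMod (p^s)))
        = ∑ t ∈ Finset.range (p^(s-k)), (fun x => leeW (p^s) (u * x)) ((p^(k+v)*t : ℕ) : ZMod (p^s)) := by
          exact Finset.sum_congr rfl fun t _ => by rw [hcast t]
      _ = p^v * ∑ t ∈ Finset.range (p^(s-(k+v))),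
            (fun x => leeW (p^s) (u * x)) ((p^(k+v)*t : ℕ) : ZMod (p^s)) :=
          sum_shift p s k v hkv (fun x => leeW (p^s) (u * x))
      _ = p^v * ∑ a ∈ Finset.univ.filter (fun a : ZMod (p^s) => p^(k+v) ∣ a.val),
            leeW (p^s) (u * a) := by
          rw [sum_over_D p s (k+v) (by omega) hkv (fun x => leeW (p^s) (u * x))]
      _ = p^v * ∑ a ∈ Finset.univ.filter (fun a : ZMod (p^s) => p^(k+v) ∣ a.val),
            leeW (p^s) a := by rw [sum_unit p s (k+v) hkv u hu]
  rw [hmain]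
  calc 4 * (p^v * ∑ a ∈ Finset.univ.filter (fun a : ZMod (p^s) => p^(k+v) ∣ a.val), leeW (p^s) a)
      = p^v * (4 * ∑ a ∈ Finset.univ.filter (fun a : ZMod (p^s) => p^(k+v) ∣ a.val), leeW (p^s) a) := by
        ring
    _ = p^v * (p^(k+v) * (p^(2*(s-(k+v))) - 1)) := by rw [sum_leeW_D p s (k+v) hp1 hodd hkv]

open scoped Classical in
/-- Construction of a shortest-length rank-1 Lee-equidistant code over `ℤ/p^sℤ`:
if `g` consists of `p` copies of each element of `⟨p^{i-1}⟩ \ ⟨p^i⟩` up to sign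
(so each pair `{a,-a}` occupies `p` coordinates) and `p-1` copies of each element of
`⟨p^j⟩ \ ⟨p^{j+1}⟩` up to sign for every `j ∈ {i,…,s-1}`, then every nonzero element
of `⟨g⟩` has Lee weight `p^{2s-i}(p²-1)/8`. -/
theorem equidistant_construction_rank_one (p s i N : ℕ) (hp : p.Prime)
    (hodd : Odd p) (hs : 0 < s) (hi1 : 1 ≤ i) (his : i ≤ s)
    (m : ℕ) (hm : m = p ^ s) [NeZero m]
    (g : Fin N → ZMod m)
    (hcoords : ∀ t, g t ≠ 0 ∧ g t ∈ Ideal.span {(p : ZMod m) ^ (i - 1)})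
    (hcount1 : ∀ a : ZMod m, a ∈ Ideal.span {(p : ZMod m) ^ (i - 1)} →
      a ∉ Ideal.span {(p : ZMod m) ^ i} →
      (Finset.univ.filter (fun t : Fin N => g t = a ∨ g t = -a)).card = p)
    (hcount2 : ∀ j, i ≤ j → j ≤ s - 1 → ∀ a : ZMod m,
      a ∈ Ideal.span {(p : ZMod m) ^ j} →
      a ∉ Ideal.span {(p : ZMod m) ^ (j + 1)} →
      (Finset.univ.filter (fun t : Fin N => g t = a ∨ g t = -a)).card = p - 1) :
    ∀ lam : ZMod m, lam • g ≠ 0 →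
      8 * leeWV m N (lam • g) = p ^ (2 * s - i) * (p ^ 2 - 1) := by
  subst hm
  obtain ⟨w, rfl⟩ : ∃ w, i = w + 1 := ⟨i - 1, by omega⟩
  simp only [Nat.add_sub_cancel] at hcoords hcount1
  intro lam hne
  have hp1 : 1 < p := hp.one_lt
  have hoddm : Odd (p^s) := hodd.pow
  -- membership conversion
  have hmem : ∀ (k : ℕ), k ≤ s → ∀ a : ZMod (p^s),
      (a ∈ Ideal.span {(p : ZMod (p^s))^k} ↔ p^k ∣ a.val) := by
    intro k hk a
    rw [Ideal.mem_span_singleton]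
    exact pow_dvd_val_iff p s k hk a
  -- factor lam
  have hlam0 : lam ≠ 0 := by rintro rfl; simp at hne
  have hn0 : lam.val ≠ 0 := by rwa [ne_eq, ZMod.val_eq_zero]
  set v := (lam.val).factorization p with hv
  have hdvd : p^v ∣ lam.val := Nat.ordProj_dvd _ _
  have hnc : lam.val = p^v * (lam.val / p^v) := (Nat.mul_div_cancel' hdvd).symm
  have hpc : ¬ p ∣ (lam.val / p^v) := Nat.not_dvd_ordCompl hp hn0
  set u := ((lam.val / p^v : ℕ) : ZMod (p^s)) with hu'
  have hu : IsUnit u := by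
    rw [hu', ZMod.isUnit_iff_coprime]
    exact Nat.Coprime.pow_right _ (Nat.coprime_comm.mp (hp.coprime_iff_not_dvd.mpr hpc))
  have hlam : lam = (p : ZMod (p^s))^v * u := by
    have h1 : ((lam.val : ℕ) : ZMod (p^s)) = lam := ZMod.natCast_rightInverse lam
    rw [← h1, hnc, hu']
    push_cast; ring
  -- v bound
  have hvs : v + (w + 1) ≤ s := by
    by_contra hcon
    push_neg at hcon
    apply hne
    funext t
    obtain ⟨b, hb⟩ := Ideal.mem_span_singleton.mp (hcoords t).2
    show lam * g t = 0
    have hz : (p : ZMod (p^s))^v * (p : ZMod (p^s))^w = 0 := by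
      rw [← pow_add]
      have hz' : ((p^(v+w) : ℕ) : ZMod (p^s)) = 0 := by
        rw [ZMod.natCast_eq_zero_iff]
        exact pow_dvd_pow p (by omega)
      push_cast at hz'
      exact hz'
    have hrw : lam * g t = ((p : ZMod (p^s))^v * (p : ZMod (p^s))^w) * (u * b) := by
      rw [hb, hlam]; ring
    rw [hrw, hz, zero_mul]
  -- the weight function
  set f : ZMod (p^s) → ℕ := fun a => leeW (p^s) (lam * a) with hf
  have hW : leeWV (p^s) N (lam • g) = ∑ t, f (g t) := by
    unfold leeWV
    refine Finset.sum_congr rfl fun t _ => ?_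
    rw [hf]
    show leeW (p^s) ((lam • g) t) = leeW (p^s) (lam * g t)
    rw [Pi.smul_apply, smul_eq_mul]
  have hfneg : ∀ x, f (-x) = f x := by
    intro x
    rw [hf]
    show leeW (p^s) (lam * -x) = leeW (p^s) (lam * x)
    rw [mul_neg]
    unfold leeW
    rcases eq_or_ne (lam * x) 0 with h | h
    · rw [h, neg_zero]
    · rw [ZMod.neg_val, if_neg h]
      have h1 := ZMod.val_lt (lam * x)
      have h2 : (lam * x).val ≠ 0 := by rwa [ne_eq, ZMod.val_eq_zero]
      omega
  have hne2 : ∀ x : ZMod (p^s), x ≠ 0 → x ≠ -x := by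
    intro x hx hcon
    have h1 : x.val = (-x).val := by rw [← hcon]
    rw [ZMod.neg_val, if_neg hx] at h1
    have h2 := ZMod.val_lt x
    have h3 : x.val ≠ 0 := by rwa [ne_eq, ZMod.val_eq_zero]
    obtain ⟨z, hz⟩ := hoddm
    omega
  set cnt : ZMod (p^s) → ℕ :=
    fun a => (Finset.univ.filter (fun t : Fin N => g t = a ∨ g t = -a)).card with hcnt
  -- double counting
  have h2W : 2 * ∑ t, f (g t) = ∑ a : ZMod (p^s), cnt a * f a := by
    symm
    calc ∑ a : ZMod (p^s), cnt a * f a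
        = ∑ a : ZMod (p^s), ∑ t : Fin N, (if g t = a ∨ g t = -a then f a else 0) := by
          refine Finset.sum_congr rfl fun a _ => ?_
          rw [show (∑ t : Fin N, if g t = a ∨ g t = -a then f a else 0)
              = ∑ t ∈ Finset.univ.filter (fun t : Fin N => g t = a ∨ g t = -a), f a from
              (Finset.sum_filter _ _).symm, Finset.sum_const, smul_eq_mul, hcnt]
      _ = ∑ t : Fin N, ∑ a : ZMod (p^s), (if g t = a ∨ g t = -a then f a else 0) :=
          Finset.sum_comm
      _ = ∑ t : Fin N, (f (g t) + f (-(g t))) := by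
          refine Finset.sum_congr rfl fun t _ => ?_
          rw [← Finset.sum_filter]
          have hset : Finset.univ.filter (fun a : ZMod (p^s) => g t = a ∨ g t = -a)
              = {g t, -(g t)} := by
            ext a
            simp only [Finset.mem_filter, Finset.mem_univ, true_and, Finset.mem_insert,
              Finset.mem_singleton]
            constructor
            · rintro (rfl | h)
              · exact Or.inl rfl
              · right; rw [h, neg_neg]
            · rintro (rfl | rfl)
              · exact Or.inl rfl
              · right; rw [neg_neg]
          rw [hset, Finset.sum_pair (hne2 (g t) (hcoords t).1)]
      _ = ∑ t : Fin N, 2 * f (g t) := by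
          refine Finset.sum_congr rfl fun t _ => ?_
          rw [hfneg]; omega
      _ = 2 * ∑ t, f (g t) := by rw [← Finset.mul_sum]
  -- the D sets
  set D1 : Finset (ZMod (p^s)) := Finset.univ.filter (fun a : ZMod (p^s) => p^w ∣ a.val) with hD1
  set D2 : Finset (ZMod (p^s)) :=
    Finset.univ.filter (fun a : ZMod (p^s) => p^(w+1) ∣ a.val) with hD2
  set E1 : Finset (ZMod (p^s)) := D1 \ D2 with hE1
  set E2 : Finset (ZMod (p^s)) := D2 \ {0} with hE2
  have hD21 : D2 ⊆ D1 := by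
    intro a ha
    rw [hD2, Finset.mem_filter] at ha
    rw [hD1, Finset.mem_filter]
    exact ⟨Finset.mem_univ _, dvd_trans (pow_dvd_pow p (by omega)) ha.2⟩
  have h0D2 : ({0} : Finset (ZMod (p^s))) ⊆ D2 := by
    intro a ha
    rw [Finset.mem_singleton] at ha
    rw [hD2, Finset.mem_filter, ha, ZMod.val_zero]
    exact ⟨Finset.mem_univ _, dvd_zero _⟩
  -- zero outside
  have hzero : ∀ a ∈ (Finset.univ : Finset (ZMod (p^s))), a ∉ E1 ∪ E2 → cnt a * f a = 0 := by
    intro a _ ha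
    rw [Finset.mem_union] at ha
    push_neg at ha
    suffices hc : cnt a = 0 by rw [hc, zero_mul]
    rw [hcnt, Finset.card_eq_zero, Finset.filter_eq_empty_iff]
    intro t _
    rintro (h | h)
    · have ha1 : a ∈ D1 := by
        rw [hD1, Finset.mem_filter]
        exact ⟨Finset.mem_univ _, by rw [← h]; exact (hmem w (by omega) _).mp (hcoords t).2⟩
      have ha0 : a ≠ 0 := h ▸ (hcoords t).1
      have haD2 : a ∈ D2 := by
        by_contra h2
        exact ha.1 (by rw [hE1, Finset.mem_sdiff]; exact ⟨ha1, h2⟩)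
      exact ha.2 (by rw [hE2, Finset.mem_sdiff, Finset.mem_singleton]; exact ⟨haD2, ha0⟩)
    · have ha' : a = -(g t) := by rw [h, neg_neg]
      have hgz : (p : ZMod (p^s))^w ∣ g t := Ideal.mem_span_singleton.mp (hcoords t).2
      have hd1 : (p : ZMod (p^s))^w ∣ a := by
        rw [ha']
        exact dvd_neg.mpr hgz
      have ha1 : a ∈ D1 := by
        rw [hD1, Finset.mem_filter]
        exact ⟨Finset.mem_univ _, (pow_dvd_val_iff p s w (by omega) a).mp hd1⟩
      have ha0 : a ≠ 0 := by
        rw [ha', ne_eq, neg_eq_zero]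
        exact (hcoords t).1
      have haD2 : a ∈ D2 := by
        by_contra h2
        exact ha.1 (by rw [hE1, Finset.mem_sdiff]; exact ⟨ha1, h2⟩)
      exact ha.2 (by rw [hE2, Finset.mem_sdiff, Finset.mem_singleton]; exact ⟨haD2, ha0⟩)
  have hdisj : Disjoint E1 E2 := by
    rw [Finset.disjoint_left]
    intro a h1 h2
    rw [hE1, Finset.mem_sdiff] at h1
    rw [hE2, Finset.mem_sdiff] at h2
    exact h1.2 h2.1
  have hcE1 : ∀ a ∈ E1, cnt a = p := by
    intro a ha
    rw [hE1, Finset.mem_sdiff, hD1, hD2, Finset.mem_filter, Finset.mem_filter] at ha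
    refine hcount1 a ((hmem w (by omega) a).mpr ha.1.2) ?_
    intro hsp
    exact ha.2 ⟨Finset.mem_univ _, (hmem (w+1) (by omega) a).mp hsp⟩
  have hcE2 : ∀ a ∈ E2, cnt a = p - 1 := by
    intro a ha
    rw [hE2, Finset.mem_sdiff, Finset.mem_singleton, hD2, Finset.mem_filter] at ha
    obtain ⟨⟨-, hval⟩, ha0⟩ := ha
    have hvne : a.val ≠ 0 := by rwa [ne_eq, ZMod.val_eq_zero]
    set j := (a.val).factorization p with hj
    have hj1 : p^j ∣ a.val := Nat.ordProj_dvd _ _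
    have hj2 : ¬ p^(j+1) ∣ a.val := Nat.pow_succ_factorization_not_dvd hvne hp
    have hij : w + 1 ≤ j := (Nat.Prime.pow_dvd_iff_le_factorization hp hvne).mp hval
    have hjs : j < s := by
      by_contra hcon
      push_neg at hcon
      have := Nat.le_of_dvd (Nat.pos_of_ne_zero hvne) (dvd_trans (pow_dvd_pow p hcon) hj1)
      have := ZMod.val_lt a
      omega
    refine hcount2 j hij (by omega) a ((hmem j (by omega) a).mpr hj1) ?_
    intro hsp
    exact hj2 ((hmem (j+1) (by omega) a).mp hsp)
  -- partial sums
  have hstep : ∑ a : ZMod (p^s), cnt a * f a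
      = p * (∑ a ∈ E1, f a) + (p-1) * (∑ a ∈ E2, f a) := by
    calc ∑ a : ZMod (p^s), cnt a * f a = ∑ a ∈ E1 ∪ E2, cnt a * f a :=
          (Finset.sum_subset (Finset.subset_univ _) hzero).symm
      _ = ∑ a ∈ E1, cnt a * f a + ∑ a ∈ E2, cnt a * f a := Finset.sum_union hdisj
      _ = ∑ a ∈ E1, p * f a + ∑ a ∈ E2, (p-1) * f a := by
          have e1 : ∑ a ∈ E1, cnt a * f a = ∑ a ∈ E1, p * f a :=
            Finset.sum_congr rfl (fun a ha => by rw [hcE1 a ha])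
          have e2 : ∑ a ∈ E2, cnt a * f a = ∑ a ∈ E2, (p-1) * f a :=
            Finset.sum_congr rfl (fun a ha => by rw [hcE2 a ha])
          rw [e1, e2]
      _ = p * (∑ a ∈ E1, f a) + (p-1) * (∑ a ∈ E2, f a) := by
          rw [Finset.mul_sum, Finset.mul_sum]
  have hS1 : (∑ a ∈ E1, f a) + (∑ a ∈ D2, f a) = ∑ a ∈ D1, f a := Finset.sum_sdiff hD21
  have hf0 : f 0 = 0 := by
    rw [hf]
    show leeW (p^s) (lam * 0) = 0
    rw [mul_zero]
    unfold leeW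
    rw [ZMod.val_zero]
    simp
  have hS2 : (∑ a ∈ E2, f a) = ∑ a ∈ D2, f a := by
    have h := Finset.sum_sdiff (f := f) h0D2
    rw [Finset.sum_singleton, hf0, ← hE2] at h
    omega
  -- values of A and B
  have hAval : 4 * (∑ a ∈ D1, f a) = p^v * (p^(w+v) * (p^(2*(s-(w+v))) - 1)) := by
    have hfeq : ∀ a ∈ D1, f a = leeW (p^s) ((p : ZMod (p^s))^v * u * a) := by
      intro a _
      rw [hf]
      show leeW (p^s) (lam * a) = _
      rw [hlam]
    rw [Finset.sum_congr rfl hfeq, hD1]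
    exact T_val p s w v hp hodd (by omega) u hu
  have hBval : 4 * (∑ a ∈ D2, f a) = p^v * (p^(w+1+v) * (p^(2*(s-(w+1+v))) - 1)) := by
    have hfeq : ∀ a ∈ D2, f a = leeW (p^s) ((p : ZMod (p^s))^v * u * a) := by
      intro a _
      rw [hf]
      show leeW (p^s) (lam * a) = _
      rw [hlam]
    rw [Finset.sum_congr rfl hfeq, hD2]
    exact T_val p s (w+1) v hp hodd (by omega) u hu
  -- final arithmetic
  obtain ⟨e, he⟩ : ∃ e, s = w + v + e + 1 := ⟨s - w - v - 1, by omega⟩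
  have hexp1 : 2*(s-(w+v)) = 2*e+2 := by omega
  have hexp2 : 2*(s-(w+1+v)) = 2*e := by omega
  have hexp3 : 2*s - (w+1) = w + 2*v + 2*e + 1 := by omega
  rw [hexp1] at hAval
  rw [hexp2] at hBval
  rw [hW, hexp3]
  have hx1 : 1 ≤ p^(2*e) := Nat.one_le_pow _ _ (by omega)
  have hx2 : 1 ≤ p^(2*e+2) := Nat.one_le_pow _ _ (by omega)
  have hx3 : 1 ≤ p^2 := Nat.one_le_pow _ _ (by omega)
  have hx4 : 1 ≤ p := by omega
  zify [hx1, hx2, hx3, hx4] at h2W hstep hS1 hS2 hAval hBval ⊢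
  linear_combination 4*h2W + 4*hstep + 4*(p:ℤ)*hS1 + (4*(p:ℤ)-4)*hS2 + (p:ℤ)*hAval - hBval
end
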